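/- arXiv:2411.05924 — 4 statements merged into one kernel-verified Lean document; each statement's English description precedes it below -/
import Mathlib

section
/- There exists a constant C > 0 such that for every integer n ≥ 1 and every u ∈ L²(0,1), the piecewise-linear projection satisfies ‖𝔍_n u‖_{L²(0,1)} ≤ C ‖u‖_{L²(0,1)}. -/
open MeasureTheory
open scoped ENNReal


/-- The hat function `𝔢_{i,n}`: continuous, piecewise linear, supported on
`[(i-1)h_n, (i+1)h_n]` with `h_n = 1/(n+1)`, affine on each of the two subintervals,
and with peak value `𝔢_{i,n}(i h_n) = h_n^{-1/2} = √(n+1)`. -/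
noncomputable def hatFn (n i : ℕ) : ℝ → ℝ := fun x =>
  Real.sqrt ((n : ℝ) + 1) * max 0 (1 - |((n : ℝ) + 1) * x - (i : ℝ)|)

/-- The piecewise-linear projection `𝔍_n u = ∑_{i=1}^n (∫₀¹ u 𝔢_{i,n}) 𝔢_{i,n}`. -/
noncomputable def Jn (n : ℕ) (u : ℝ → ℝ) : ℝ → ℝ := fun x =>
  ∑ i ∈ Finset.Icc 1 n, (∫ y in (0:ℝ)..1, u y * hatFn n i y) * hatFn n i x


lemma sum_ite_cast_le {s : Finset ℕ} (m : ℤ) {c : ℝ} (hc : 0 ≤ c) :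
    ∑ i ∈ s, (if (i : ℤ) = m then c else 0) ≤ c := by
  classical
  calc ∑ i ∈ s, (if (i : ℤ) = m then c else 0)
      ≤ ∑ i ∈ s, (if i = m.toNat then c else 0) := by
        refine Finset.sum_le_sum fun i _ => ?_
        split_ifs with h1 h2 h2 <;> first | rfl | exact hc | (exfalso; omega)
    _ ≤ c := by
        rw [Finset.sum_ite_eq' s m.toNat fun _ => c]
        split_ifs <;> simp [hc]

lemma tent_sum_le (t : ℝ) (s : Finset ℕ) :
    ∑ i ∈ s, max 0 (1 - |t - (i : ℝ)|) ≤ 1 := by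
  classical
  set m : ℤ := ⌊t⌋ with hm
  have hmt : (m : ℝ) ≤ t := Int.floor_le t
  have htm : t < (m : ℝ) + 1 := Int.lt_floor_add_one t
  have key : ∀ i : ℕ, max 0 (1 - |t - (i : ℝ)|) ≤
      (if (i : ℤ) = m then 1 - (t - m) else 0) + (if (i : ℤ) = m + 1 then t - m else 0) := by
    intro i
    by_cases h1 : (i : ℤ) = m
    · have : (i : ℝ) = (m : ℝ) := by exact_mod_cast congrArg (fun z : ℤ => (z : ℝ)) h1
      rw [if_pos h1, if_neg (by omega)]
      rw [this, abs_of_nonneg (by linarith)]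
      apply max_le <;> linarith
    · by_cases h2 : (i : ℤ) = m + 1
      · have : (i : ℝ) = (m : ℝ) + 1 := by exact_mod_cast congrArg (fun z : ℤ => (z : ℝ)) h2
        rw [if_neg h1, if_pos h2, this, abs_of_nonpos (by linarith)]
        apply max_le <;> linarith
      · rw [if_neg h1, if_neg h2]
        have hi : |t - (i : ℝ)| ≥ 1 := by
          rcases lt_or_ge (i : ℤ) m with h | h
          · have : (i : ℝ) ≤ (m : ℝ) - 1 := by exact_mod_cast (by omega : (i:ℤ) ≤ m - 1)
            rw [abs_of_nonneg (by linarith)]; linarith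
          · have : (m : ℝ) + 2 ≤ (i : ℝ) := by exact_mod_cast (by omega : m + 2 ≤ (i:ℤ))
            rw [abs_of_nonpos (by linarith)]; linarith
        simp
        linarith
  calc ∑ i ∈ s, max 0 (1 - |t - (i : ℝ)|)
      ≤ ∑ i ∈ s, ((if (i : ℤ) = m then 1 - (t - m) else 0)
          + (if (i : ℤ) = m + 1 then t - m else 0)) := Finset.sum_le_sum fun i _ => key i
    _ = (∑ i ∈ s, if (i : ℤ) = m then 1 - (t - m) else 0)
          + ∑ i ∈ s, if (i : ℤ) = m + 1 then t - m else 0 := Finset.sum_add_distrib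
    _ ≤ (1 - (t - m)) + (t - m) := by
        gcongr
        · exact sum_ite_cast_le m (by linarith)
        · exact sum_ite_cast_le (m + 1) (by linarith)
    _ = 1 := by ring

lemma hatFn_nonneg (n i : ℕ) (x : ℝ) : 0 ≤ hatFn n i x :=
  mul_nonneg (Real.sqrt_nonneg _) (le_max_left _ _)

lemma hatFn_le (n i : ℕ) (x : ℝ) : hatFn n i x ≤ Real.sqrt ((n : ℝ) + 1) := by
  have : max 0 (1 - |((n : ℝ) + 1) * x - (i : ℝ)|) ≤ 1 := by
    apply max_le zero_le_one; have := abs_nonneg (((n : ℝ) + 1) * x - (i : ℝ)); linarith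
  calc hatFn n i x ≤ Real.sqrt ((n : ℝ) + 1) * 1 := by
        exact mul_le_mul_of_nonneg_left this (Real.sqrt_nonneg _)
    _ = _ := mul_one _

lemma hatFn_continuous (n i : ℕ) : Continuous (hatFn n i) := by
  unfold hatFn
  fun_prop

lemma hatFn_sum_le (n : ℕ) (x : ℝ) :
    ∑ i ∈ Finset.Icc 1 n, hatFn n i x ≤ Real.sqrt ((n : ℝ) + 1) := by
  unfold hatFn
  rw [← Finset.mul_sum]
  calc Real.sqrt ((n : ℝ) + 1) * ∑ i ∈ Finset.Icc 1 n, max 0 (1 - |((n : ℝ) + 1) * x - (i : ℝ)|)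
      ≤ Real.sqrt ((n : ℝ) + 1) * 1 :=
        mul_le_mul_of_nonneg_left (tent_sum_le _ _) (Real.sqrt_nonneg _)
    _ = _ := mul_one _

lemma hatFn_eq_zero (n i : ℕ) {x : ℝ}
    (hx : x ∉ Set.Ioo (((i : ℝ) - 1) / ((n : ℝ) + 1)) (((i : ℝ) + 1) / ((n : ℝ) + 1))) :
    hatFn n i x = 0 := by
  have hN : (0 : ℝ) < (n : ℝ) + 1 := by positivity
  unfold hatFn
  rw [Set.mem_Ioo, not_and_or] at hx
  have h1 : 1 - |((n : ℝ) + 1) * x - (i : ℝ)| ≤ 0 := by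
    rcases hx with h | h
    · push_neg at h
      have h2 := (le_div_iff₀ hN).mp h
      have : ((n : ℝ) + 1) * x - (i : ℝ) ≤ -1 := by nlinarith
      have := neg_abs_le (((n : ℝ) + 1) * x - (i : ℝ)); linarith
    · push_neg at h
      have h2 := (div_le_iff₀ hN).mp h
      have : 1 ≤ ((n : ℝ) + 1) * x - (i : ℝ) := by nlinarith
      have := le_abs_self (((n : ℝ) + 1) * x - (i : ℝ)); linarith
  rw [max_eq_left h1, mul_zero]

lemma lintegral_hatFn_le (n i : ℕ) :
    ∫⁻ x in Set.Ioo (0:ℝ) 1, ENNReal.ofReal (hatFn n i x) ≤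
      ENNReal.ofReal (2 / Real.sqrt ((n : ℝ) + 1)) := by
  have hN : (0 : ℝ) < (n : ℝ) + 1 := by positivity
  set a := (((i : ℝ) - 1) / ((n : ℝ) + 1))
  set b := (((i : ℝ) + 1) / ((n : ℝ) + 1))
  have hmono : ∀ x, ENNReal.ofReal (hatFn n i x) ≤
      Set.indicator (Set.Ioo a b) (fun _ => ENNReal.ofReal (Real.sqrt ((n : ℝ) + 1))) x := by
    intro x
    by_cases hx : x ∈ Set.Ioo a b
    · rw [Set.indicator_of_mem hx]
      exact ENNReal.ofReal_le_ofReal (hatFn_le n i x)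
    · rw [Set.indicator_of_notMem hx, hatFn_eq_zero n i hx]
      simp
  calc ∫⁻ x in Set.Ioo (0:ℝ) 1, ENNReal.ofReal (hatFn n i x)
      ≤ ∫⁻ x in Set.Ioo (0:ℝ) 1,
          Set.indicator (Set.Ioo a b) (fun _ => ENNReal.ofReal (Real.sqrt ((n : ℝ) + 1))) x :=
        lintegral_mono hmono
    _ = ENNReal.ofReal (Real.sqrt ((n : ℝ) + 1)) *
          (volume.restrict (Set.Ioo (0:ℝ) 1)) (Set.Ioo a b) := by
        rw [lintegral_indicator measurableSet_Ioo]
        simp [mul_comm]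
    _ ≤ ENNReal.ofReal (Real.sqrt ((n : ℝ) + 1)) * volume (Set.Ioo a b) := by
        gcongr
        exact Measure.restrict_le_self
    _ ≤ ENNReal.ofReal (2 / Real.sqrt ((n : ℝ) + 1)) := by
        rw [Real.volume_Ioo, ← ENNReal.ofReal_mul (Real.sqrt_nonneg _)]
        apply ENNReal.ofReal_le_ofReal
        have hb : b - a = 2 / ((n : ℝ) + 1) := by
          show ((i : ℝ) + 1) / ((n : ℝ) + 1) - ((i : ℝ) - 1) / ((n : ℝ) + 1) = 2 / ((n : ℝ) + 1)
          rw [div_sub_div_same]; congr 1; ring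
        rw [hb]
        have hs : 0 < Real.sqrt ((n : ℝ) + 1) := Real.sqrt_pos.mpr hN
        have h2 : Real.sqrt ((n : ℝ) + 1) ^ 2 = (n : ℝ) + 1 := Real.sq_sqrt hN.le
        rw [mul_div_assoc', div_le_div_iff₀ hN hs]; nlinarith [h2, hs]

lemma rpow_two_eq (x : ℝ≥0∞) : x ^ (2:ℝ) = x ^ 2 := by
  rw [← ENNReal.rpow_natCast x 2]; norm_num

lemma sq_halves (x : ℝ≥0∞) : (x ^ ((1:ℝ)/2)) ^ 2 = x := by
  rw [← ENNReal.rpow_natCast (x ^ ((1:ℝ)/2)) 2, ← ENNReal.rpow_mul]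
  norm_num

/-- There exists `C > 0` such that for every `n ≥ 1` and every `u ∈ L²(0,1)`,
`‖𝔍_n u‖_{L²(0,1)} ≤ C ‖u‖_{L²(0,1)}`. -/
theorem stmt4 :
    ∃ C : ℝ, 0 < C ∧ ∀ n : ℕ, 1 ≤ n → ∀ u : ℝ → ℝ,
      MemLp u 2 (volume.restrict (Set.Ioo (0:ℝ) 1)) →
      eLpNorm (Jn n u) 2 (volume.restrict (Set.Ioo (0:ℝ) 1)) ≤
        ENNReal.ofReal C * eLpNorm u 2 (volume.restrict (Set.Ioo (0:ℝ) 1)) := by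
  refine ⟨2, by norm_num, ?_⟩
  intro n _hn u hu
  set μ := volume.restrict (Set.Ioo (0:ℝ) 1) with hμdef
  have hN : (0:ℝ) < (n : ℝ) + 1 := by positivity
  have hsN : (0:ℝ) < Real.sqrt ((n : ℝ) + 1) := Real.sqrt_pos.mpr hN
  set s : Finset ℕ := Finset.Icc 1 n with hs
  set c : ℕ → ℝ := fun i => ∫ y in (0:ℝ)..1, u y * hatFn n i y with hc
  set w : ℕ → ℝ → ℝ≥0∞ := fun i y => ENNReal.ofReal (hatFn n i y) with hw
  set b : ℝ≥0∞ := ENNReal.ofReal (2 / Real.sqrt ((n : ℝ) + 1)) with hb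
  set A : ℕ → ℝ≥0∞ := fun i => ∫⁻ y, (‖u y‖₊ : ℝ≥0∞) ^ 2 * w i y ∂μ with hA
  set U : ℝ≥0∞ := ∫⁻ y, (‖u y‖₊ : ℝ≥0∞) ^ 2 ∂μ with hU
  have hu_meas : AEMeasurable u μ := hu.1.aemeasurable
  have hw_meas : ∀ i, Measurable (w i) := fun i =>
    (hatFn_continuous n i).measurable.ennreal_ofReal
  have hBle : ∀ i, ∫⁻ y, w i y ∂μ ≤ b := fun i => lintegral_hatFn_le n i
  have hbne : b ≠ ∞ := ENNReal.ofReal_ne_top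
  -- coefficient bound
  have hcoef : ∀ i, ENNReal.ofReal ((c i) ^ 2) ≤ b * A i := by
    intro i
    have e2 : μ = volume.restrict (Set.Ioc (0:ℝ) 1) :=
      Measure.restrict_congr_set Ioo_ae_eq_Ioc
    have h1 : (‖c i‖₊ : ℝ≥0∞) ≤ ∫⁻ y, (‖u y‖₊ : ℝ≥0∞) * w i y ∂μ := by
      calc (‖c i‖₊ : ℝ≥0∞)
          ≤ ∫⁻ y, ‖u y * hatFn n i y‖₊ ∂(volume.restrict (Set.Ioc (0:ℝ) 1)) := by
            rw [hc]
            simp only [intervalIntegral.integral_of_le (zero_le_one (α := ℝ))]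
            exact enorm_integral_le_lintegral_enorm _
        _ = ∫⁻ y, (‖u y‖₊ : ℝ≥0∞) * w i y ∂μ := by
            rw [e2]
            refine lintegral_congr fun y => ?_
            rw [nnnorm_mul, ENNReal.coe_mul, hw]
            exact congrArg _ (Real.enorm_eq_ofReal (hatFn_nonneg n i y))
    have hpq : Real.HolderConjugate 2 2 := Real.HolderConjugate.two_two
    set f : ℝ → ℝ≥0∞ := fun y => (‖u y‖₊ : ℝ≥0∞) * (w i y) ^ ((1:ℝ)/2) with hf
    set g : ℝ → ℝ≥0∞ := fun y => (w i y) ^ ((1:ℝ)/2) with hg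
    have hfm : AEMeasurable f μ :=
      hu_meas.enorm.mul ((hw_meas i).pow_const _).aemeasurable
    have hgm : AEMeasurable g μ := ((hw_meas i).pow_const _).aemeasurable
    have hfg : ∀ y, f y * g y = (‖u y‖₊ : ℝ≥0∞) * w i y := by
      intro y
      rw [hf, hg, mul_assoc,
        ← ENNReal.rpow_add_of_nonneg _ _ (by norm_num) (by norm_num)]
      norm_num
    have hf2 : ∀ y, f y ^ (2:ℝ) = (‖u y‖₊ : ℝ≥0∞) ^ 2 * w i y := by
      intro y
      rw [hf, ENNReal.mul_rpow_of_nonneg _ _ (by norm_num), rpow_two_eq, rpow_two_eq,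
        sq_halves]
    have hg2 : ∀ y, g y ^ (2:ℝ) = w i y := by
      intro y
      rw [hg, rpow_two_eq, sq_halves]
    have hH := ENNReal.lintegral_mul_le_Lp_mul_Lq μ hpq hfm hgm
    have h2 : (‖c i‖₊ : ℝ≥0∞) ≤ (A i) ^ ((1:ℝ)/2) * ((∫⁻ y, w i y ∂μ)) ^ ((1:ℝ)/2) := by
      refine h1.trans ?_
      calc ∫⁻ y, (‖u y‖₊ : ℝ≥0∞) * w i y ∂μ
          = ∫⁻ y, (f * g) y ∂μ := lintegral_congr fun y => (hfg y).symm
        _ ≤ (∫⁻ y, f y ^ (2:ℝ) ∂μ) ^ ((1:ℝ)/2) * (∫⁻ y, g y ^ (2:ℝ) ∂μ) ^ ((1:ℝ)/2) := hH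
        _ = (A i) ^ ((1:ℝ)/2) * ((∫⁻ y, w i y ∂μ)) ^ ((1:ℝ)/2) := by
            rw [hA, lintegral_congr hf2, lintegral_congr hg2]
    have h3 : ENNReal.ofReal ((c i) ^ 2) = (‖c i‖₊ : ℝ≥0∞) ^ 2 := by
      rw [show (‖c i‖₊ : ℝ≥0∞) = ENNReal.ofReal |c i| from Real.enorm_eq_ofReal_abs _,
        ← ENNReal.ofReal_pow (abs_nonneg _), sq_abs]
    rw [h3]
    calc (‖c i‖₊ : ℝ≥0∞) ^ 2
        ≤ ((A i) ^ ((1:ℝ)/2) * ((∫⁻ y, w i y ∂μ)) ^ ((1:ℝ)/2)) ^ 2 := by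
          exact pow_le_pow_left₀ zero_le h2 2
      _ = A i * (∫⁻ y, w i y ∂μ) := by
          rw [mul_pow, sq_halves, sq_halves]
      _ ≤ A i * b := by gcongr; exact hBle i
      _ = b * A i := mul_comm _ _
  -- pointwise bound
  have hpt : ∀ x, (‖Jn n u x‖₊ : ℝ≥0∞) ^ 2 ≤
      ENNReal.ofReal (Real.sqrt ((n : ℝ) + 1)) *
        ∑ i ∈ s, ENNReal.ofReal ((c i) ^ 2) * w i x := by
    intro x
    have habs : |Jn n u x| ≤ ∑ i ∈ s, |c i| * hatFn n i x := by
      refine (Finset.abs_sum_le_sum_abs _ _).trans ?_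
      refine Finset.sum_le_sum fun i _ => ?_
      rw [abs_mul, abs_of_nonneg (hatFn_nonneg n i x)]
    have hcs : (∑ i ∈ s, |c i| * hatFn n i x) ^ 2 ≤
        (∑ i ∈ s, hatFn n i x) * ∑ i ∈ s, (c i) ^ 2 * hatFn n i x := by
      have key := Finset.sum_mul_sq_le_sq_mul_sq s (fun i => Real.sqrt (hatFn n i x))
        (fun i => |c i| * Real.sqrt (hatFn n i x))
      calc (∑ i ∈ s, |c i| * hatFn n i x) ^ 2
          = (∑ i ∈ s, Real.sqrt (hatFn n i x) * (|c i| * Real.sqrt (hatFn n i x))) ^ 2 := by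
            congr 1
            refine Finset.sum_congr rfl fun i _ => ?_
            rw [mul_comm (Real.sqrt _), mul_assoc, Real.mul_self_sqrt (hatFn_nonneg n i x)]
        _ ≤ (∑ i ∈ s, Real.sqrt (hatFn n i x) ^ 2) *
              ∑ i ∈ s, (|c i| * Real.sqrt (hatFn n i x)) ^ 2 := key
        _ = (∑ i ∈ s, hatFn n i x) * ∑ i ∈ s, (c i) ^ 2 * hatFn n i x := by
            congr 1
            · exact Finset.sum_congr rfl fun i _ => Real.sq_sqrt (hatFn_nonneg n i x)
            · refine Finset.sum_congr rfl fun i _ => ?_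
              rw [mul_pow, Real.sq_sqrt (hatFn_nonneg n i x), sq_abs]
    have hsum_nonneg : 0 ≤ ∑ i ∈ s, (c i) ^ 2 * hatFn n i x :=
      Finset.sum_nonneg fun i _ => mul_nonneg (sq_nonneg _) (hatFn_nonneg n i x)
    have hreal : |Jn n u x| ^ 2 ≤
        Real.sqrt ((n : ℝ) + 1) * ∑ i ∈ s, (c i) ^ 2 * hatFn n i x := by
      calc |Jn n u x| ^ 2 ≤ (∑ i ∈ s, |c i| * hatFn n i x) ^ 2 := by
            apply pow_le_pow_left₀ (abs_nonneg _) habs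
        _ ≤ (∑ i ∈ s, hatFn n i x) * ∑ i ∈ s, (c i) ^ 2 * hatFn n i x := hcs
        _ ≤ Real.sqrt ((n : ℝ) + 1) * ∑ i ∈ s, (c i) ^ 2 * hatFn n i x := by
            exact mul_le_mul_of_nonneg_right (hatFn_sum_le n x) hsum_nonneg
    calc (‖Jn n u x‖₊ : ℝ≥0∞) ^ 2
        = ENNReal.ofReal (|Jn n u x| ^ 2) := by
          rw [show (‖Jn n u x‖₊ : ℝ≥0∞) = ENNReal.ofReal |Jn n u x| from Real.enorm_eq_ofReal_abs _,
            ← ENNReal.ofReal_pow (abs_nonneg _)]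
      _ ≤ ENNReal.ofReal (Real.sqrt ((n : ℝ) + 1) * ∑ i ∈ s, (c i) ^ 2 * hatFn n i x) :=
          ENNReal.ofReal_le_ofReal hreal
      _ = ENNReal.ofReal (Real.sqrt ((n : ℝ) + 1)) *
            ∑ i ∈ s, ENNReal.ofReal ((c i) ^ 2) * w i x := by
          rw [ENNReal.ofReal_mul (Real.sqrt_nonneg _)]
          congr 1
          rw [ENNReal.ofReal_sum_of_nonneg
            (fun i _ => mul_nonneg (sq_nonneg _) (hatFn_nonneg n i x))]
          exact Finset.sum_congr rfl fun i _ => ENNReal.ofReal_mul (sq_nonneg _)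
  -- integrate
  have hL : ∫⁻ x, (‖Jn n u x‖₊ : ℝ≥0∞) ^ 2 ∂μ ≤ ENNReal.ofReal 4 * U := by
    have step2 : ∀ i ∈ s, ∫⁻ x, ENNReal.ofReal ((c i) ^ 2) * w i x ∂μ ≤ b * A i * b := by
      intro i _
      rw [lintegral_const_mul' _ _ ENNReal.ofReal_ne_top]
      exact mul_le_mul' (hcoef i) (hBle i)
    have step3 : ∑ i ∈ s, A i ≤ ENNReal.ofReal (Real.sqrt ((n : ℝ) + 1)) * U := by
      have hmeas : ∀ i ∈ s, AEMeasurable (fun y => (‖u y‖₊ : ℝ≥0∞) ^ 2 * w i y) μ :=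
        fun i _ => (hu_meas.enorm.pow_const 2).mul (hw_meas i).aemeasurable
      rw [hA, ← lintegral_finset_sum' s hmeas]
      calc ∫⁻ y, ∑ i ∈ s, (‖u y‖₊ : ℝ≥0∞) ^ 2 * w i y ∂μ
          ≤ ∫⁻ y, (‖u y‖₊ : ℝ≥0∞) ^ 2 * ENNReal.ofReal (Real.sqrt ((n : ℝ) + 1)) ∂μ := by
            refine lintegral_mono fun y => ?_
            rw [← Finset.mul_sum]
            refine mul_le_mul_right ?_ _
            rw [hw, ← ENNReal.ofReal_sum_of_nonneg (fun i _ => hatFn_nonneg n i y)]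
            exact ENNReal.ofReal_le_ofReal (hatFn_sum_le n y)
        _ = U * ENNReal.ofReal (Real.sqrt ((n : ℝ) + 1)) :=
            lintegral_mul_const' _ _ ENNReal.ofReal_ne_top
        _ = _ := mul_comm _ _
    have hkey : ENNReal.ofReal (Real.sqrt ((n : ℝ) + 1)) * b = ENNReal.ofReal 2 := by
      rw [hb, ← ENNReal.ofReal_mul (Real.sqrt_nonneg _)]
      congr 1
      field_simp
    calc ∫⁻ x, (‖Jn n u x‖₊ : ℝ≥0∞) ^ 2 ∂μ
        ≤ ∫⁻ x, ENNReal.ofReal (Real.sqrt ((n : ℝ) + 1)) *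
            ∑ i ∈ s, ENNReal.ofReal ((c i) ^ 2) * w i x ∂μ := lintegral_mono hpt
      _ = ENNReal.ofReal (Real.sqrt ((n : ℝ) + 1)) *
            ∫⁻ x, ∑ i ∈ s, ENNReal.ofReal ((c i) ^ 2) * w i x ∂μ :=
          lintegral_const_mul' _ _ ENNReal.ofReal_ne_top
      _ = ENNReal.ofReal (Real.sqrt ((n : ℝ) + 1)) *
            ∑ i ∈ s, ∫⁻ x, ENNReal.ofReal ((c i) ^ 2) * w i x ∂μ := by
          rw [lintegral_finset_sum s (fun i _ => (hw_meas i).const_mul _)]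
      _ ≤ ENNReal.ofReal (Real.sqrt ((n : ℝ) + 1)) * ∑ i ∈ s, b * A i * b := by
          gcongr with i hi
          exact step2 i hi
      _ = ENNReal.ofReal (Real.sqrt ((n : ℝ) + 1)) * (b * (∑ i ∈ s, A i) * b) := by
          rw [← Finset.sum_mul, ← Finset.mul_sum]
      _ ≤ ENNReal.ofReal (Real.sqrt ((n : ℝ) + 1)) *
            (b * (ENNReal.ofReal (Real.sqrt ((n : ℝ) + 1)) * U) * b) := by
          gcongr
      _ = (ENNReal.ofReal (Real.sqrt ((n : ℝ) + 1)) * b) *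
            (ENNReal.ofReal (Real.sqrt ((n : ℝ) + 1)) * b) * U := by ring
      _ = ENNReal.ofReal 4 * U := by
          rw [hkey, ← ENNReal.ofReal_mul (by norm_num)]
          norm_num
  rw [eLpNorm_eq_lintegral_rpow_enorm_toReal (by norm_num) (by simp),
      eLpNorm_eq_lintegral_rpow_enorm_toReal (by norm_num) (by simp)]
  simp only [ENNReal.toReal_ofNat]
  have hconv : ∀ f : ℝ → ℝ, ∫⁻ x, ‖f x‖ₑ ^ (2:ℝ) ∂μ
      = ∫⁻ x, (‖f x‖₊ : ℝ≥0∞) ^ 2 ∂μ := fun f => lintegral_congr fun x => rpow_two_eq _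
  rw [hconv, hconv]
  have h42 : ENNReal.ofReal 2 = (ENNReal.ofReal 4) ^ ((1:ℝ)/2) := by
    rw [ENNReal.ofReal_rpow_of_pos (by norm_num)]
    congr 1
    rw [show (4:ℝ) = 2 ^ (2:ℕ) by norm_num, ← Real.rpow_natCast 2 2,
      ← Real.rpow_mul (by norm_num)]
    norm_num
  rw [h42, ← ENNReal.mul_rpow_of_nonneg _ _ (by norm_num)]
  exact ENNReal.rpow_le_rpow hL (by norm_num)
end

section
/- There exists a constant C > 0, independent of n, such that for every integer n ≥ 1 and all vectors v, w ∈ ℝⁿ, (v⊙w)ᵀ L_n^{−1} (v⊙w) ≤ C · (vᵀ L_n^{−1} v) · (wᵀ L_n w), where v⊙w ∈ ℝⁿ denotes the entrywise (Hadamard) product. (Discrete pointwise-product estimate ‖v⊙w‖_{𝐇^{−1}_n} ≲ ‖v‖_{𝐇^{−1}_n}‖w‖_{𝐇^1_n}.) -/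
/-- The discrete Dirichlet Laplacian `L_n`: the `n×n` symmetric tridiagonal matrix with
diagonal entries `2/h_n² = 2(n+1)²` and subdiagonal and superdiagonal entries
`-1/h_n² = -(n+1)²`, where `h_n = 1/(n+1)`. -/
noncomputable def Ldisc (n : ℕ) : Matrix (Fin n) (Fin n) ℝ := fun i j =>
  if i = j then 2 * ((n : ℝ) + 1) ^ 2
  else if i.1 + 1 = j.1 ∨ j.1 + 1 = i.1 then -(((n : ℝ) + 1) ^ 2)
  else 0

open Matrix Finset

namespace Stmt9Aux

/-- The forward-difference matrix with Dirichlet boundary. -/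
def Bmat (n : ℕ) : Matrix (Fin (n+1)) (Fin n) ℝ := fun k i =>
  (if (k:ℕ) = (i:ℕ) then 1 else 0) - (if (k:ℕ) = (i:ℕ) + 1 then 1 else 0)

variable {n : ℕ}

lemma sum_delta_mul (a b : ℕ) (ha : a < n+1) :
    ∑ k : Fin (n+1), ((if (k:ℕ) = a then (1:ℝ) else 0) * (if (k:ℕ) = b then 1 else 0))
      = if a = b then 1 else 0 := by
  rw [Finset.sum_eq_single (⟨a, ha⟩ : Fin (n+1))]
  · by_cases h : a = b <;> simp [h]
  · intro k _ hk
    have : (k:ℕ) ≠ a := fun h => hk (Fin.ext h)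
    simp [this]
  · simp

lemma Ldisc_eq : Ldisc n = ((n:ℝ)+1)^2 • ((Bmat n)ᵀ * Bmat n) := by
  ext i j
  have hi : (i:ℕ) < n + 1 := i.isLt.trans (Nat.lt_succ_self n)
  have hi1 : (i:ℕ) + 1 < n + 1 := Nat.succ_lt_succ i.isLt
  have hsum : ∑ k : Fin (n+1), Bmat n k i * Bmat n k j
      = (if (i:ℕ) = (j:ℕ) then (1:ℝ) else 0) - (if (i:ℕ) = (j:ℕ)+1 then 1 else 0)
        - ((if (i:ℕ)+1 = (j:ℕ) then 1 else 0) - (if (i:ℕ)+1 = (j:ℕ)+1 then 1 else 0)) := by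
    have expand : ∀ k : Fin (n+1), Bmat n k i * Bmat n k j
        = ((if (k:ℕ) = (i:ℕ) then (1:ℝ) else 0) * (if (k:ℕ) = (j:ℕ) then 1 else 0)
          - (if (k:ℕ) = (i:ℕ) then (1:ℝ) else 0) * (if (k:ℕ) = (j:ℕ)+1 then 1 else 0))
          - ((if (k:ℕ) = (i:ℕ)+1 then (1:ℝ) else 0) * (if (k:ℕ) = (j:ℕ) then 1 else 0)
          - (if (k:ℕ) = (i:ℕ)+1 then (1:ℝ) else 0) * (if (k:ℕ) = (j:ℕ)+1 then 1 else 0)) := by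
      intro k; simp only [Bmat]; ring
    rw [Finset.sum_congr rfl (fun k _ => expand k)]
    rw [Finset.sum_sub_distrib, Finset.sum_sub_distrib, Finset.sum_sub_distrib]
    rw [sum_delta_mul _ _ hi, sum_delta_mul _ _ hi, sum_delta_mul _ _ hi1,
      sum_delta_mul _ _ hi1]
  simp only [Matrix.smul_apply, Matrix.mul_apply, Matrix.transpose_apply, smul_eq_mul]
  rw [hsum]
  by_cases hij : i = j
  · have heq : (i:ℕ) = (j:ℕ) := by rw [hij]
    have h1 : ¬((i:ℕ) = (j:ℕ)+1) := by omega
    have h2 : ¬((i:ℕ)+1 = (j:ℕ)) := by omega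
    have h4 : (i:ℕ)+1 = (j:ℕ)+1 := by omega
    simp only [Ldisc, if_pos hij, if_pos heq, if_neg h1, if_neg h2, if_pos h4]
    ring
  · have hne : (i:ℕ) ≠ (j:ℕ) := fun h => hij (Fin.ext h)
    have h4 : ¬((i:ℕ)+1 = (j:ℕ)+1) := by omega
    simp only [Ldisc, if_neg hij, if_neg hne, if_neg h4]
    by_cases h2 : (i:ℕ)+1 = (j:ℕ)
    · have h3 : ¬((i:ℕ) = (j:ℕ)+1) := by omega
      rw [if_pos (Or.inl h2), if_neg h3, if_pos h2]
      ring
    · by_cases h3 : (j:ℕ)+1 = (i:ℕ)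
      · have h3' : (i:ℕ) = (j:ℕ)+1 := h3.symm
        rw [if_pos (Or.inr h3), if_pos h3', if_neg h2]
        ring
      · have hor : ¬((i:ℕ)+1 = (j:ℕ) ∨ (j:ℕ)+1 = (i:ℕ)) := by tauto
        have h3' : ¬((i:ℕ) = (j:ℕ)+1) := fun h => h3 h.symm
        rw [if_neg hor, if_neg h3', if_neg h2]
        ring

lemma quad (x y : Fin n → ℝ) :
    x ⬝ᵥ (Ldisc n) *ᵥ y
      = ((n:ℝ)+1)^2 * ∑ k, ((Bmat n) *ᵥ x) k * ((Bmat n) *ᵥ y) k := by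
  rw [Ldisc_eq, Matrix.smul_mulVec, dotProduct_smul,
    ← Matrix.mulVec_mulVec, Matrix.dotProduct_mulVec, Matrix.vecMul_transpose]
  rfl

/-- Extension of a vector by zero: `Ev x j = x (j-1)` for `1 ≤ j ≤ n`, else `0`. -/
def Ev (x : Fin n → ℝ) (j : ℕ) : ℝ :=
  if h : j - 1 < n ∧ 1 ≤ j then x ⟨j-1, h.1⟩ else 0

lemma sum1 (a : ℕ) (x : Fin n → ℝ) :
    ∑ i : Fin n, (if a = (i:ℕ) then (1:ℝ) else 0) * x i
      = if h : a < n then x ⟨a, h⟩ else 0 := by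
  by_cases h : a < n
  · rw [dif_pos h, Finset.sum_eq_single (⟨a, h⟩ : Fin n)]
    · simp
    · intro i _ hi
      have : a ≠ (i:ℕ) := fun e => hi (Fin.ext e.symm)
      simp [this]
    · simp
  · rw [dif_neg h, Finset.sum_eq_zero]
    intro i _
    have : a ≠ (i:ℕ) := by omega
    simp [this]

lemma sum2 (a : ℕ) (x : Fin n → ℝ) :
    ∑ i : Fin n, (if a = (i:ℕ)+1 then (1:ℝ) else 0) * x i = Ev x a := by
  unfold Ev
  by_cases h : a - 1 < n ∧ 1 ≤ a
  · rw [dif_pos h, Finset.sum_eq_single (⟨a-1, h.1⟩ : Fin n)]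
    · have : a = (a-1)+1 := by omega
      simp [← this]
    · intro i _ hi
      have : a ≠ (i:ℕ)+1 := by
        intro e
        exact hi (Fin.ext (show (i:ℕ) = a - 1 by omega))
      simp [this]
    · simp
  · rw [dif_neg h, Finset.sum_eq_zero]
    intro i _
    have : a ≠ (i:ℕ)+1 := by
      intro e
      exact h ⟨by omega, by omega⟩
    simp [this]

lemma mulVec_B (x : Fin n → ℝ) (k : Fin (n+1)) :
    ((Bmat n) *ᵥ x) k = Ev x ((k:ℕ)+1) - Ev x (k:ℕ) := by
  have : ((Bmat n) *ᵥ x) k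
      = ∑ i : Fin n, (if (k:ℕ) = (i:ℕ) then (1:ℝ) else 0) * x i
        - ∑ i : Fin n, (if (k:ℕ) = (i:ℕ)+1 then (1:ℝ) else 0) * x i := by
    rw [← Finset.sum_sub_distrib]
    simp only [Matrix.mulVec, dotProduct, Bmat, sub_mul]
  rw [this, sum1, sum2]
  congr 1
  unfold Ev
  by_cases h : (k:ℕ) < n
  · rw [dif_pos h, dif_pos ⟨by omega, by omega⟩]
    rfl
  · rw [dif_neg h, dif_neg (by omega)]

/-- `Ev` is multiplicative. -/
lemma Ev_mul (x y : Fin n → ℝ) (j : ℕ) :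
    Ev (fun i => x i * y i) j = Ev x j * Ev y j := by
  unfold Ev
  by_cases h : j - 1 < n ∧ 1 ≤ j
  · rw [dif_pos h, dif_pos h, dif_pos h]
  · rw [dif_neg h, dif_neg h, dif_neg h, mul_zero]

/-- `B x` as a function on `ℕ`, extended by zero. -/
def bseq (x : Fin n → ℝ) (k : ℕ) : ℝ :=
  if h : k < n+1 then ((Bmat n) *ᵥ x) ⟨k, h⟩ else 0

lemma Ev_eq_sum (x : Fin n → ℝ) (j : ℕ) :
    Ev x j = ∑ k ∈ Finset.range j, bseq x k := by
  induction j with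
  | zero => simp [Ev]
  | succ j ih =>
    rw [Finset.sum_range_succ, ← ih]
    by_cases h : j < n + 1
    · have hb : bseq x j = Ev x (j+1) - Ev x j := by
        rw [bseq, dif_pos h, mulVec_B]
      rw [hb]; ring
    · have hb : bseq x j = 0 := by rw [bseq, dif_neg h]
      have h1 : Ev x j = 0 := by rw [Ev, dif_neg (by omega)]
      have h2 : Ev x (j+1) = 0 := by rw [Ev, dif_neg (by omega)]
      rw [hb, h1, h2, add_zero]

lemma sum_bseq_sq (x : Fin n → ℝ) :
    ∑ k ∈ Finset.range (n+1), bseq x k ^ 2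
      = ∑ k : Fin (n+1), ((Bmat n) *ᵥ x) k ^ 2 := by
  rw [← Fin.sum_univ_eq_sum_range (fun k => bseq x k ^ 2) (n+1)]
  refine Finset.sum_congr rfl fun k _ => ?_
  rw [bseq, dif_pos k.isLt]

/-- Discrete Sobolev sup bound. -/
lemma Ev_sq_le (x : Fin n → ℝ) (j : ℕ) :
    (Ev x j) ^ 2 ≤ ((n:ℝ)+1) * ∑ k : Fin (n+1), ((Bmat n) *ᵥ x) k ^ 2 := by
  have habs : |Ev x j| ≤ ∑ k ∈ Finset.range (n+1), |bseq x k| := by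
    rw [Ev_eq_sum]
    refine (Finset.abs_sum_le_sum_abs _ _).trans ?_
    rcases le_total j (n+1) with h | h
    · exact Finset.sum_le_sum_of_subset_of_nonneg
        (Finset.range_subset_range.2 h) (fun k _ _ => abs_nonneg _)
    · refine le_of_eq (Finset.sum_subset (Finset.range_subset_range.2 h) ?_).symm
      intro k hk hk'
      simp only [Finset.mem_range] at hk hk'
      rw [bseq, dif_neg (by omega), abs_zero]
  have hcs := Finset.sum_mul_sq_le_sq_mul_sq (Finset.range (n+1))
    (fun k => |bseq x k|) (fun _ => (1:ℝ))
  simp only [mul_one, one_pow, Finset.sum_const, Finset.card_range,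
    nsmul_eq_mul, sq_abs] at hcs
  have h1 : (Ev x j) ^ 2 ≤ (∑ k ∈ Finset.range (n+1), |bseq x k|) ^ 2 := by
    rw [← sq_abs]
    exact pow_le_pow_left₀ (abs_nonneg _) habs 2
  calc (Ev x j) ^ 2 ≤ (∑ k ∈ Finset.range (n+1), bseq x k ^ 2) * ((n+1 : ℕ) : ℝ) :=
        h1.trans hcs
    _ = ((n:ℝ)+1) * ∑ k : Fin (n+1), ((Bmat n) *ᵥ x) k ^ 2 := by
        rw [sum_bseq_sq]; push_cast; ring

lemma quad_nonneg (x : Fin n → ℝ) : 0 ≤ x ⬝ᵥ (Ldisc n) *ᵥ x := by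
  rw [quad]
  have h1 : (0:ℝ) ≤ ((n:ℝ)+1)^2 := sq_nonneg _
  have h2 : (0:ℝ) ≤ ∑ k, ((Bmat n) *ᵥ x) k * ((Bmat n) *ᵥ x) k :=
    Finset.sum_nonneg fun k _ => mul_self_nonneg _
  positivity

/-- Cauchy–Schwarz for the quadratic form of `Ldisc`. -/
lemma cs_L (x y : Fin n → ℝ) :
    (x ⬝ᵥ (Ldisc n) *ᵥ y) ^ 2
      ≤ (x ⬝ᵥ (Ldisc n) *ᵥ x) * (y ⬝ᵥ (Ldisc n) *ᵥ y) := by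
  rw [quad, quad, quad]
  set f := (Bmat n) *ᵥ x
  set g := (Bmat n) *ᵥ y
  have hcs := Finset.sum_mul_sq_le_sq_mul_sq Finset.univ f g
  have hc : (0:ℝ) ≤ ((n:ℝ)+1)^2 := sq_nonneg _
  have e1 : ∑ k, f k * f k = ∑ k, f k ^ 2 := by
    refine Finset.sum_congr rfl fun k _ => (sq (f k)).symm
  have e2 : ∑ k, g k * g k = ∑ k, g k ^ 2 := by
    refine Finset.sum_congr rfl fun k _ => (sq (g k)).symm
  rw [e1, e2]
  calc (((n:ℝ)+1)^2 * ∑ k, f k * g k) ^ 2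
      = ((n:ℝ)+1)^2 * ((n:ℝ)+1)^2 * (∑ k, f k * g k) ^ 2 := by ring
    _ ≤ ((n:ℝ)+1)^2 * ((n:ℝ)+1)^2 * ((∑ k, f k ^ 2) * ∑ k, g k ^ 2) := by
        have := mul_le_mul_of_nonneg_left hcs (mul_nonneg hc hc)
        linarith
    _ = (((n:ℝ)+1)^2 * ∑ k, f k ^ 2) * (((n:ℝ)+1)^2 * ∑ k, g k ^ 2) := by ring

/-- Discrete Leibniz-type estimate for the `H¹` form. -/
lemma prod_quad (u w : Fin n → ℝ) :
    (fun i => u i * w i) ⬝ᵥ (Ldisc n) *ᵥ (fun i => u i * w i)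
      ≤ 4 * (u ⬝ᵥ (Ldisc n) *ᵥ u) * (w ⬝ᵥ (Ldisc n) *ᵥ w) := by
  set P := ∑ k : Fin (n+1), ((Bmat n) *ᵥ u) k ^ 2 with hP
  set Q := ∑ k : Fin (n+1), ((Bmat n) *ᵥ w) k ^ 2 with hQ
  have hPnn : 0 ≤ P := Finset.sum_nonneg fun k _ => sq_nonneg _
  have hQnn : 0 ≤ Q := Finset.sum_nonneg fun k _ => sq_nonneg _
  have hc : (0:ℝ) ≤ (n:ℝ) + 1 := by positivity
  -- pointwise bound on each difference of the product
  have key : ∀ k : Fin (n+1), ((Bmat n) *ᵥ fun i => u i * w i) k ^ 2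
      ≤ 2 * ((n:ℝ)+1) * P * ((Bmat n) *ᵥ w) k ^ 2
        + 2 * ((n:ℝ)+1) * Q * ((Bmat n) *ᵥ u) k ^ 2 := by
    intro k
    have hB : ((Bmat n) *ᵥ fun i => u i * w i) k
        = Ev u ((k:ℕ)+1) * ((Bmat n) *ᵥ w) k + ((Bmat n) *ᵥ u) k * Ev w (k:ℕ) := by
      rw [mulVec_B, mulVec_B, mulVec_B, Ev_mul, Ev_mul]
      ring
    rw [hB]
    have h1 : (Ev u ((k:ℕ)+1))^2 ≤ ((n:ℝ)+1) * P := Ev_sq_le u _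
    have h2 : (Ev w (k:ℕ))^2 ≤ ((n:ℝ)+1) * Q := Ev_sq_le w _
    nlinarith [sq_nonneg (Ev u ((k:ℕ)+1) * ((Bmat n) *ᵥ w) k
        - ((Bmat n) *ᵥ u) k * Ev w (k:ℕ)), sq_nonneg (((Bmat n) *ᵥ w) k),
      sq_nonneg (((Bmat n) *ᵥ u) k)]
  have hsum : ∑ k : Fin (n+1), ((Bmat n) *ᵥ fun i => u i * w i) k ^ 2
      ≤ 4 * ((n:ℝ)+1) * P * Q := by
    calc ∑ k : Fin (n+1), ((Bmat n) *ᵥ fun i => u i * w i) k ^ 2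
        ≤ ∑ k : Fin (n+1), (2 * ((n:ℝ)+1) * P * ((Bmat n) *ᵥ w) k ^ 2
            + 2 * ((n:ℝ)+1) * Q * ((Bmat n) *ᵥ u) k ^ 2) :=
          Finset.sum_le_sum fun k _ => key k
      _ = 2 * ((n:ℝ)+1) * P * Q + 2 * ((n:ℝ)+1) * Q * P := by
          rw [Finset.sum_add_distrib, ← Finset.mul_sum, ← Finset.mul_sum, ← hP, ← hQ]
      _ = 4 * ((n:ℝ)+1) * P * Q := by ring
  have e0 : ∀ x : Fin n → ℝ, x ⬝ᵥ (Ldisc n) *ᵥ x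
      = ((n:ℝ)+1)^2 * ∑ k : Fin (n+1), ((Bmat n) *ᵥ x) k ^ 2 := by
    intro x
    rw [quad]
    congr 1
    exact Finset.sum_congr rfl fun k _ => (sq _).symm
  rw [e0, e0, e0, ← hP, ← hQ]
  have hone : (1:ℝ) ≤ (n:ℝ)+1 := by
    have : (0:ℝ) ≤ (n:ℝ) := Nat.cast_nonneg n; linarith
  have hle : ((n:ℝ)+1)^3 ≤ ((n:ℝ)+1)^4 :=
    pow_le_pow_right₀ hone (by norm_num)
  calc ((n:ℝ)+1)^2 * ∑ k : Fin (n+1), ((Bmat n) *ᵥ fun i => u i * w i) k ^ 2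
      ≤ ((n:ℝ)+1)^2 * (4 * ((n:ℝ)+1) * P * Q) := by
        have := mul_le_mul_of_nonneg_left hsum (sq_nonneg ((n:ℝ)+1))
        linarith
    _ = 4 * ((n:ℝ)+1)^3 * (P * Q) := by ring
    _ ≤ 4 * ((n:ℝ)+1)^4 * (P * Q) := by nlinarith [mul_nonneg hPnn hQnn]
    _ = 4 * (((n:ℝ)+1)^2 * P) * (((n:ℝ)+1)^2 * Q) := by ring

/-- `Ldisc` is positive definite. -/
lemma Ldisc_posDef : (Ldisc n).PosDef := by
  rw [Matrix.posDef_iff_dotProduct_mulVec]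
  constructor
  · ext i j
    simp only [Matrix.conjTranspose_apply, star_trivial, Ldisc]
    by_cases h : i = j
    · subst h
      simp
    · have h' : ¬ j = i := fun e => h e.symm
      by_cases h2 : (j:ℕ)+1 = (i:ℕ) ∨ (i:ℕ)+1 = (j:ℕ)
      · rw [if_neg h', if_pos h2, if_neg h, if_pos (Or.comm.mp h2)]
      · rw [if_neg h', if_neg h2, if_neg h, if_neg (fun hh => h2 (Or.comm.mp hh))]
  · intro x hx
    simp only [star_trivial]
    rcases lt_or_eq_of_le (quad_nonneg x) with h | h
    · exact h
    · exfalso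
      apply hx
      rw [quad] at h
      have hc : ((n:ℝ)+1)^2 ≠ 0 := by positivity
      have hsum : ∑ k, ((Bmat n) *ᵥ x) k * ((Bmat n) *ᵥ x) k = 0 := by
        rcases mul_eq_zero.mp h.symm with h | h
        · exact absurd h hc
        · exact h
      have hzero : ∀ k : Fin (n+1), ((Bmat n) *ᵥ x) k = 0 := by
        intro k
        have h2 := (Finset.sum_eq_zero_iff_of_nonneg
          (fun j (_ : j ∈ Finset.univ) => mul_self_nonneg (((Bmat n) *ᵥ x) j))).mp
          hsum k (Finset.mem_univ k)
        exact mul_self_eq_zero.mp h2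
      have hb : ∀ j, bseq x j = 0 := by
        intro j
        by_cases h : j < n+1
        · rw [bseq, dif_pos h]; exact hzero _
        · rw [bseq, dif_neg h]
      have hEv : ∀ j, Ev x j = 0 := by
        intro j
        rw [Ev_eq_sum]
        exact Finset.sum_eq_zero fun k _ => hb k
      funext i
      have := hEv ((i:ℕ)+1)
      rw [Ev, dif_pos ⟨by omega, by omega⟩] at this
      simpa using this

lemma Ldisc_det_isUnit : IsUnit (Ldisc n).det :=
  isUnit_iff_ne_zero.2 (Ldisc_posDef.det_pos).ne'

lemma inv_quad_nonneg (v : Fin n → ℝ) : 0 ≤ v ⬝ᵥ (Ldisc n)⁻¹ *ᵥ v := by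
  have hmul : (Ldisc n) *ᵥ ((Ldisc n)⁻¹ *ᵥ v) = v := by
    rw [Matrix.mulVec_mulVec, Matrix.mul_nonsing_inv _ Ldisc_det_isUnit,
      Matrix.one_mulVec]
  set b := (Ldisc n)⁻¹ *ᵥ v with hb
  have : v ⬝ᵥ b = b ⬝ᵥ (Ldisc n) *ᵥ b := by
    rw [hmul, dotProduct_comm]
  rw [this]
  exact quad_nonneg b

end Stmt9Aux

/-- Discrete pointwise-product estimate `‖v⊙w‖_{𝐇⁻¹ₙ} ≲ ‖v‖_{𝐇⁻¹ₙ} ‖w‖_{𝐇¹ₙ}`: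
there is `C > 0`, independent of `n`, such that for all `n ≥ 1` and `v, w ∈ ℝⁿ`,
`(v⊙w)ᵀ Lₙ⁻¹ (v⊙w) ≤ C (vᵀ Lₙ⁻¹ v)(wᵀ Lₙ w)`, with `⊙` the entrywise product. -/
theorem stmt9 :
    ∃ C : ℝ, 0 < C ∧ ∀ n : ℕ, 1 ≤ n → ∀ v w : Fin n → ℝ,
      dotProduct (fun i => v i * w i)
          (Matrix.mulVec (Ldisc n)⁻¹ (fun i => v i * w i)) ≤
        C * (dotProduct v (Matrix.mulVec (Ldisc n)⁻¹ v)) *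
          (dotProduct w (Matrix.mulVec (Ldisc n) w)) := by
  refine ⟨4, by norm_num, ?_⟩
  intro n _hn v w
  have hdet := Stmt9Aux.Ldisc_det_isUnit (n := n)
  set p : Fin n → ℝ := fun i => v i * w i with hp
  set u : Fin n → ℝ := (Ldisc n)⁻¹ *ᵥ p with hu
  set b : Fin n → ℝ := (Ldisc n)⁻¹ *ᵥ v with hb
  have hLu : (Ldisc n) *ᵥ u = p := by
    rw [hu, Matrix.mulVec_mulVec, Matrix.mul_nonsing_inv _ hdet, Matrix.one_mulVec]
  have hLb : (Ldisc n) *ᵥ b = v := by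
    rw [hb, Matrix.mulVec_mulVec, Matrix.mul_nonsing_inv _ hdet, Matrix.one_mulVec]
  set q : Fin n → ℝ := fun i => u i * w i with hq
  set X := p ⬝ᵥ u with hX
  set Y := v ⬝ᵥ b with hY
  set W := w ⬝ᵥ (Ldisc n) *ᵥ w with hW
  -- the goal is `X ≤ 4 * Y * W`
  have hXQ : X = u ⬝ᵥ (Ldisc n) *ᵥ u := by
    rw [hX, hLu, dotProduct_comm]
  have hXnn : 0 ≤ X := hXQ ▸ Stmt9Aux.quad_nonneg u
  have hYnn : 0 ≤ Y := Stmt9Aux.inv_quad_nonneg v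
  have hWnn : 0 ≤ W := Stmt9Aux.quad_nonneg w
  have h1 : X = q ⬝ᵥ v := by
    rw [hX]
    refine Finset.sum_congr rfl fun i _ => ?_
    simp only [hp, hq]
    ring
  have h2 : q ⬝ᵥ v = q ⬝ᵥ (Ldisc n) *ᵥ b := by rw [hLb]
  have h4 : b ⬝ᵥ (Ldisc n) *ᵥ b = Y := by
    rw [hLb, dotProduct_comm, hY]
  have h5 : q ⬝ᵥ (Ldisc n) *ᵥ q ≤ 4 * X * W := by
    have := Stmt9Aux.prod_quad u w
    rw [← hXQ] at this
    exact this
  have hqnn : 0 ≤ q ⬝ᵥ (Ldisc n) *ᵥ q := Stmt9Aux.quad_nonneg q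
  have hX2 : X ^ 2 ≤ 4 * X * W * Y := by
    calc X ^ 2 = (q ⬝ᵥ (Ldisc n) *ᵥ b) ^ 2 := by rw [h1, h2]
      _ ≤ (q ⬝ᵥ (Ldisc n) *ᵥ q) * (b ⬝ᵥ (Ldisc n) *ᵥ b) := Stmt9Aux.cs_L q b
      _ = (q ⬝ᵥ (Ldisc n) *ᵥ q) * Y := by rw [h4]
      _ ≤ (4 * X * W) * Y := mul_le_mul_of_nonneg_right h5 hYnn
      _ = 4 * X * W * Y := by ring
  rcases eq_or_lt_of_le hXnn with h0 | hpos
  · rw [← h0]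
    have := mul_nonneg hYnn hWnn
    linarith
  · have hXX : X * X ≤ X * (4 * Y * W) := by nlinarith [hX2]
    exact le_of_mul_le_mul_left hXX hpos
end

section
/- There exists a constant C > 0, independent of n, such that for every integer n ≥ 1 and all k, ℓ ∈ {1,…,n}, (m_{k,n}⊙m_{ℓ,n})ᵀ L_n^{−1} (m_{k,n}⊙m_{ℓ,n}) ≤ (C/n) · λ_{k,n}^{−1} · λ_{ℓ,n} · k²(k²+ℓ²) / ( ℓ²(1 + (k+ℓ)² + (k²−ℓ²)²) ), where ⊙ denotes the entrywise product of vectors in ℝⁿ. -/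
/-- The eigenvalue `λ_{k,n} = (4/h_n²) sin²(kπ h_n / 2) = 4(n+1)² sin²(kπ/(2(n+1)))`. -/
noncomputable def lamE (n k : ℕ) : ℝ :=
  4 * ((n : ℝ) + 1) ^ 2 * Real.sin ((k : ℝ) * Real.pi / (2 * ((n : ℝ) + 1))) ^ 2

/-- The eigenvector `m_{k,n} ∈ ℝⁿ` with entries `m_{k,n}(i) = √(2 h_n) sin(kπ i h_n)`
for `i = 1,…,n` (here indexed by `Fin n`, the `i`-th coordinate being `i+1`). -/
noncomputable def mvec (n k : ℕ) : Fin n → ℝ := fun i =>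
  Real.sqrt (2 / ((n : ℝ) + 1)) * Real.sin ((k : ℝ) * Real.pi * ((i : ℝ) + 1) / ((n : ℝ) + 1))

open Real

/- ### abs helper -/
private lemma abs_sub_le' (a b : ℝ) : |a - b| ≤ |a| + |b| := by
  rw [sub_eq_add_neg]
  exact (abs_add_le _ _).trans (by rw [abs_neg])

/- ### lamE lemmas -/
lemma lamE_eq (n m : ℕ) : lamE n m
    = 2 * ((n:ℝ)+1)^2 * (1 - Real.cos ((m:ℝ) * π / ((n:ℝ)+1))) := by
  have hN : (0:ℝ) < (n:ℝ)+1 := by positivity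
  have e : (m:ℝ) * π / ((n:ℝ)+1) = 2 * ((m:ℝ) * π / (2*((n:ℝ)+1))) := by
    field_simp
  rw [lamE, e, Real.cos_two_mul]
  have := Real.sin_sq_add_cos_sq ((m:ℝ) * π / (2*((n:ℝ)+1)))
  nlinarith [this]

lemma lam_pos (n m : ℕ) (h1 : 1 ≤ m) (h2 : m ≤ 2*n+1) : 0 < lamE n m := by
  have hN : (0:ℝ) < (n:ℝ)+1 := by positivity
  have h0 : 0 < (m:ℝ) * π / (2*((n:ℝ)+1)) := by
    have : (0:ℝ) < (m:ℝ) := by exact_mod_cast h1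
    positivity
  have hlt : (m:ℝ) * π / (2*((n:ℝ)+1)) < π := by
    rw [div_lt_iff₀ (by positivity)]
    have : (m:ℝ) < 2*((n:ℝ)+1) := by
      have : (m:ℝ) ≤ 2*(n:ℝ)+1 := by exact_mod_cast h2
      linarith
    nlinarith [Real.pi_pos]
  have := Real.sin_pos_of_pos_of_lt_pi h0 hlt
  rw [lamE]; positivity

lemma sin_sq_lb (N x : ℝ) (hN : 0 < N) (hx0 : 0 ≤ x) (hx : x ≤ N) :
    4 * x^2 ≤ 4 * N^2 * Real.sin (x * π / (2*N))^2 := by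
  have h1 : 2/π * (x * π / (2*N)) ≤ Real.sin (x * π / (2*N)) := by
    apply Real.mul_le_sin
    · positivity
    · rw [div_le_div_iff₀ (by positivity) (by norm_num)]
      nlinarith [Real.pi_pos]
  have h2 : 2/π * (x * π / (2*N)) = x / N := by
    field_simp
  rw [h2] at h1
  have h3 : 0 ≤ x / N := by positivity
  have h4 : (x/N)^2 ≤ Real.sin (x * π / (2*N))^2 := by nlinarith
  have h5 : x^2 = (x/N)^2 * N^2 := by field_simp
  nlinarith [h4, sq_nonneg N]

lemma lam_lb (n m : ℕ) (h2 : m ≤ n+1) : 4*(m:ℝ)^2 ≤ lamE n m := by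
  have hN : (0:ℝ) < (n:ℝ)+1 := by positivity
  have := sin_sq_lb ((n:ℝ)+1) (m:ℝ) hN (by positivity) (by exact_mod_cast h2)
  rw [lamE]; exact this

lemma lam_lb' (n s : ℕ) (h1 : n+1 ≤ s) (h2 : s ≤ 2*n) :
    4*(2*(n:ℝ)+2-(s:ℝ))^2 ≤ lamE n s := by
  have hN : (0:ℝ) < (n:ℝ)+1 := by positivity
  have hsr : (s:ℝ) ≤ 2*(n:ℝ) := by exact_mod_cast h2
  have hsr' : (n:ℝ)+1 ≤ (s:ℝ) := by exact_mod_cast h1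
  have key : Real.sin ((s:ℝ) * π / (2*((n:ℝ)+1)))
      = Real.sin ((2*(n:ℝ)+2-(s:ℝ)) * π / (2*((n:ℝ)+1))) := by
    rw [← Real.sin_pi_sub]
    congr 1
    field_simp
  have := sin_sq_lb ((n:ℝ)+1) (2*(n:ℝ)+2-(s:ℝ)) hN (by linarith) (by linarith)
  rw [lamE, key]
  linarith [this]

lemma lam_ub (n m : ℕ) (h2 : m ≤ n+1) : lamE n m ≤ π^2 * (m:ℝ)^2 := by
  have hN : (0:ℝ) < (n:ℝ)+1 := by positivity
  set t := (m:ℝ) * π / (2*((n:ℝ)+1)) with ht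
  have ht0 : 0 ≤ t := by positivity
  have hs : Real.sin t ≤ t := Real.sin_le ht0
  have hs0 : 0 ≤ Real.sin t := by
    apply Real.sin_nonneg_of_nonneg_of_le_pi ht0
    rw [ht, div_le_iff₀ (by positivity)]
    have : (m:ℝ) ≤ (n:ℝ)+1 := by exact_mod_cast h2
    nlinarith [Real.pi_pos]
  have hsq : Real.sin t ^ 2 ≤ t ^ 2 := by nlinarith
  rw [lamE]
  calc 4 * ((n:ℝ)+1)^2 * Real.sin t ^2 ≤ 4 * ((n:ℝ)+1)^2 * t^2 := by nlinarith
    _ = π^2 * (m:ℝ)^2 := by rw [ht]; field_simp; ring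

/- ### matrix lemmas -/
lemma Ldisc_mulVec (n : ℕ) (g : ℕ → ℝ) (h0 : g 0 = 0) (hn : g (n+1) = 0) (i : Fin n) :
    (Ldisc n).mulVec (fun j : Fin n => g (j.1+1)) i
      = ((n:ℝ)+1)^2 * (2 * g (i.1+1) - g i.1 - g (i.1+2)) := by
  have hrw : ∀ j : Fin n, Ldisc n i j * g (j.1+1)
      = ((n:ℝ)+1)^2 * (2 * (if j = i then g (j.1+1) else 0)
        - (if j.1 = i.1+1 then g (j.1+1) else 0)
        - (if j.1+1 = i.1 then g (j.1+1) else 0)) := by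
    intro j
    unfold Ldisc
    simp only [Fin.ext_iff]
    split_ifs <;> first | (exfalso; omega) | ring
  unfold Matrix.mulVec dotProduct
  simp only [hrw]
  rw [← Finset.mul_sum]
  congr 1
  have s1 : ∑ j : Fin n, (if j = i then g (j.1+1) else 0) = g (i.1+1) := by
    rw [Finset.sum_ite_eq' Finset.univ i (fun j => g (j.1+1))]
    simp
  have s2 : ∑ j : Fin n, (if j.1 = i.1+1 then g (j.1+1) else 0) = g (i.1+2) := by
    by_cases hlt : i.1 + 1 < n
    · rw [Finset.sum_eq_single (⟨i.1+1, hlt⟩ : Fin n)]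
      · simp
      · intro b _ hb
        exact if_neg (by simpa [Fin.ext_iff] using hb)
      · intro h; exact absurd (Finset.mem_univ _) h
    · have h2 : i.1 + 2 = n + 1 := by omega
      rw [h2, hn, Finset.sum_eq_zero]
      intro j _
      exact if_neg (by omega)
  have s3 : ∑ j : Fin n, (if j.1+1 = i.1 then g (j.1+1) else 0) = g i.1 := by
    by_cases hi : i.1 = 0
    · rw [hi, h0, Finset.sum_eq_zero]
      intro j _
      exact if_neg (by omega)
    · rw [Finset.sum_eq_single (⟨i.1-1, by omega⟩ : Fin n)]
      · rw [if_pos (show (i.1-1)+1 = i.1 by omega)]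
        congr 1
        show i.1 - 1 + 1 = i.1
        omega
      · intro b _ hb
        apply if_neg
        have hb' : b.1 ≠ i.1 - 1 := by simpa [Fin.ext_iff] using hb
        omega
      · intro h; exact absurd (Finset.mem_univ _) h
  rw [Finset.sum_sub_distrib, Finset.sum_sub_distrib, ← Finset.mul_sum, s1, s2, s3]
  ring

lemma Ldisc_ker (n : ℕ) (x : Fin n → ℝ) (hx : (Ldisc n).mulVec x = 0) : x = 0 := by
  classical
  set g : ℕ → ℝ := fun j => if hj : 1 ≤ j ∧ j ≤ n then x ⟨j-1, by omega⟩ else 0 with hg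
  have hgx : (fun j : Fin n => g (j.1+1)) = x := by
    funext j
    have hj2 := j.2
    show (if hj : 1 ≤ j.1+1 ∧ j.1+1 ≤ n then x ⟨j.1+1-1, by omega⟩ else 0) = x j
    rw [dif_pos ⟨by omega, by omega⟩]
    exact congrArg x (Fin.ext (by simp))
  have h0 : g 0 = 0 := by rw [hg]; simp
  have hn : g (n+1) = 0 := by rw [hg]; simp
  have hrec : ∀ i : Fin n, 2 * g (i.1+1) - g i.1 - g (i.1+2) = 0 := by
    intro i
    have h1 := Ldisc_mulVec n g h0 hn i
    rw [hgx, hx] at h1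
    simp only [Pi.zero_apply] at h1
    have hN : ((n:ℝ)+1)^2 ≠ 0 := by positivity
    exact (mul_eq_zero.1 h1.symm).resolve_left hN
  have hQ : ∀ j : ℕ, j ≤ n → g j = j * g 1 ∧ g (j+1) = (j+1) * g 1 := by
    intro j
    induction j with
    | zero =>
      intro _
      refine ⟨by simp [h0], by simp⟩
    | succ j ih =>
      intro hj
      obtain ⟨q1, q2⟩ := ih (by omega)
      have h3 : 2*g (j+1) - g j - g (j+2) = 0 := hrec ⟨j, by omega⟩
      constructor
      · push_cast at q2 ⊢; linarith
      · push_cast at q1 q2 ⊢; linarith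
  have hg1 : g 1 = 0 := by
    have h4 := (hQ n le_rfl).2
    rw [hn] at h4
    have hN : ((n:ℝ)+1) ≠ 0 := by positivity
    have h5 : ((n:ℝ)+1) * g 1 = 0 := by push_cast at h4 ⊢; linarith
    exact (mul_eq_zero.1 h5).resolve_left hN
  funext i
  rw [← hgx]
  show g (i.1+1) = 0
  rw [(hQ i.1 (by omega)).2, hg1]
  ring

lemma Ldisc_inv_mulVec (n : ℕ) (v w : Fin n → ℝ) (hw : (Ldisc n).mulVec w = v) :
    (Ldisc n)⁻¹.mulVec v = w := by
  have hinj : Function.Injective (Ldisc n).mulVec := by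
    intro a b hab
    have h1 : (Ldisc n).mulVec (a - b) = 0 := by
      rw [Matrix.mulVec_sub, hab, sub_self]
    exact sub_eq_zero.1 (Ldisc_ker n _ h1)
  have hunit : IsUnit (Ldisc n) := (Matrix.mulVec_injective_iff_isUnit).1 hinj
  have hdet : IsUnit (Ldisc n).det := (Matrix.isUnit_iff_isUnit_det _).1 hunit
  rw [← hw, Matrix.mulVec_mulVec, Matrix.nonsing_inv_mul _ hdet, Matrix.one_mulVec]

/- ### trig helpers -/
lemma second_diff_cos (n m : ℕ) (j : ℝ) :
    Real.cos ((m:ℝ)*π*j/((n:ℝ)+1)) + Real.cos ((m:ℝ)*π*(j+2)/((n:ℝ)+1))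
      = 2 * Real.cos ((m:ℝ)*π*(j+1)/((n:ℝ)+1)) * Real.cos ((m:ℝ)*π/((n:ℝ)+1)) := by
  have e1 : (m:ℝ)*π*j/((n:ℝ)+1)
      = (m:ℝ)*π*(j+1)/((n:ℝ)+1) - (m:ℝ)*π/((n:ℝ)+1) := by ring
  have e2 : (m:ℝ)*π*(j+2)/((n:ℝ)+1)
      = (m:ℝ)*π*(j+1)/((n:ℝ)+1) + (m:ℝ)*π/((n:ℝ)+1) := by ring
  rw [e1, e2, Real.cos_sub, Real.cos_add]
  ring

lemma cos_second_diff (n m : ℕ) (j : ℝ) :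
    ((n:ℝ)+1)^2 * (2 * Real.cos ((m:ℝ)*π*(j+1)/((n:ℝ)+1)) - Real.cos ((m:ℝ)*π*j/((n:ℝ)+1))
      - Real.cos ((m:ℝ)*π*(j+2)/((n:ℝ)+1)))
      - lamE n m * Real.cos ((m:ℝ)*π*(j+1)/((n:ℝ)+1)) = 0 := by
  have hbm : 2*((n:ℝ)+1)^2 * Real.cos ((m:ℝ)*π/((n:ℝ)+1))
      = 2*((n:ℝ)+1)^2 - lamE n m := by
    linear_combination lamE_eq n m
  have sd := second_diff_cos n m j
  linear_combination (-(((n:ℝ)+1)^2))*sd - Real.cos ((m:ℝ)*π*(j+1)/((n:ℝ)+1))*hbm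

lemma mvec_mul (n m m' : ℕ) (i : Fin n) :
    mvec n m i * mvec n m' i
      = (1/((n:ℝ)+1)) * (Real.cos (((m:ℝ)-(m':ℝ))*π*((i.1:ℝ)+1)/((n:ℝ)+1))
          - Real.cos (((m:ℝ)+(m':ℝ))*π*((i.1:ℝ)+1)/((n:ℝ)+1))) := by
  unfold mvec
  have hN : (0:ℝ) < (n:ℝ)+1 := by positivity
  have hs : Real.sqrt (2/((n:ℝ)+1)) * Real.sqrt (2/((n:ℝ)+1)) = 2/((n:ℝ)+1) :=
    Real.mul_self_sqrt (by positivity)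
  set A := (m:ℝ) * π * ((i:ℝ)+1) / ((n:ℝ)+1) with hA
  set B := (m':ℝ) * π * ((i:ℝ)+1) / ((n:ℝ)+1) with hB
  have e1 : ((m:ℝ)-(m':ℝ))*π*((i.1:ℝ)+1)/((n:ℝ)+1) = A - B := by rw [hA, hB]; ring
  have e2 : ((m:ℝ)+(m':ℝ))*π*((i.1:ℝ)+1)/((n:ℝ)+1) = A + B := by rw [hA, hB]; ring
  rw [e1, e2, Real.cos_sub, Real.cos_add]
  have expand : Real.sqrt (2/((n:ℝ)+1)) * Real.sin A * (Real.sqrt (2/((n:ℝ)+1)) * Real.sin B)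
      = (Real.sqrt (2/((n:ℝ)+1)) * Real.sqrt (2/((n:ℝ)+1))) * (Real.sin A * Real.sin B) := by
    ring
  rw [expand, hs]
  ring

/- ### sum bound -/
lemma dot_bound (n : ℕ) (v w : Fin n → ℝ) (a b : ℝ)
    (hv : ∀ i, |v i| ≤ a) (hw : ∀ i, |w i| ≤ b) :
    dotProduct v w ≤ n * (a*b) := by
  unfold dotProduct
  calc ∑ i, v i * w i ≤ ∑ _i : Fin n, a*b := by
        apply Finset.sum_le_sum
        intro i _
        calc v i * w i ≤ |v i * w i| := le_abs_self _
          _ = |v i| * |w i| := abs_mul _ _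
          _ ≤ a * b :=
            mul_le_mul (hv i) (hw i) (abs_nonneg _) ((abs_nonneg _).trans (hv i))
    _ = n * (a*b) := by
        rw [Finset.sum_const, Finset.card_univ, Fintype.card_fin, nsmul_eq_mul]

/- ### final inequalities -/
lemma final_ineq (nn A B a b dd s : ℝ) (hn : 1 ≤ nn) (hA0 : 0 < A) (hA : A ≤ π^2*a^2)
    (hB : 4*b^2 ≤ B) (ha : 1 ≤ a) (hb : 1 ≤ b) (hd : 1 ≤ dd) (hs : s = a + b)
    (hds : (a-b)^2 = dd^2) :
    2/(nn*dd^2) ≤ (30/nn) * A⁻¹ * B * (a^2*(a^2+b^2)) / (b^2*(1+(a+b)^2+(a^2-b^2)^2)) := by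
  have hB0 : 0 < B := lt_of_lt_of_le (by positivity) hB
  have hQ : 1+(a+b)^2+(a^2-b^2)^2 = 1 + s^2 + dd^2*s^2 := by
    rw [hs]; linear_combination ((a+b)^2) * hds
  have hs2 : 2 ≤ s := by rw [hs]; linarith
  have hQle : 1 + s^2 + dd^2*s^2 ≤ 3*(s^2*dd^2) := by
    have hdd1 : (1:ℝ) ≤ dd^2 := by nlinarith
    have hss : (4:ℝ) ≤ s^2 := by nlinarith
    nlinarith [mul_le_mul_of_nonneg_left hdd1 (show (0:ℝ) ≤ 2*s^2 by positivity)]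
  have hPge : s^2/2 ≤ a^2+b^2 := by rw [hs]; nlinarith [sq_nonneg (a-b)]
  have hpi : π^2 ≤ 10 := by nlinarith [Real.pi_lt_d2, Real.pi_gt_three]
  have hRe : (30/nn) * A⁻¹ * B * (a^2*(a^2+b^2)) / (b^2*(1+(a+b)^2+(a^2-b^2)^2))
      = (30 * (B * ((a^2*(a^2+b^2))*dd^2))) / ((nn * (A * (b^2*(1+s^2+dd^2*s^2)))) * dd^2) := by
    rw [hQ]
    have h1 : (0:ℝ) < 1 + s^2 + dd^2*s^2 := by positivity
    field_simp
  rw [hRe, div_le_div_iff₀ (by positivity) (by positivity)]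
  have key : 2*(A*(b^2*(1+s^2+dd^2*s^2))) ≤ 30*(B*((a^2*(a^2+b^2))*dd^2)) := by
    calc 2*(A*(b^2*(1+s^2+dd^2*s^2))) ≤ 2*((π^2*a^2)*(b^2*(3*(s^2*dd^2)))) := by
          gcongr
      _ = 6*π^2*(a^2*b^2*s^2*dd^2) := by ring
      _ ≤ 60*(a^2*b^2*s^2*dd^2) := by
          have hnn : (0:ℝ) ≤ a^2*b^2*s^2*dd^2 := by positivity
          nlinarith [hpi, hnn]
      _ = 30*((4*b^2)*((a^2*(s^2/2))*dd^2)) := by ring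
      _ ≤ 30*(B*((a^2*(a^2+b^2))*dd^2)) := by gcongr
  calc 2*((nn * (A * (b^2*(1+s^2+dd^2*s^2)))) * dd^2)
      = (nn*dd^2)*(2*(A*(b^2*(1+s^2+dd^2*s^2)))) := by ring
    _ ≤ (nn*dd^2)*(30*(B*((a^2*(a^2+b^2))*dd^2))) := by
        apply mul_le_mul_of_nonneg_left key (by positivity)
    _ = 30*(B*(a^2*(a^2+b^2)*dd^2))*(nn*dd^2) := by ring

lemma final_ineq_eq (nn A a : ℝ) (hn : 1 ≤ nn) (hA : 0 < A) (ha : 1 ≤ a) :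
    1/(2*nn) ≤ (30/nn) * A⁻¹ * A * (a^2*(a^2+a^2)) / (a^2*(1+(a+a)^2+(a^2-a^2)^2)) := by
  have hRe : (30/nn) * A⁻¹ * A * (a^2*(a^2+a^2)) / (a^2*(1+(a+a)^2+(a^2-a^2)^2))
      = (60*a^2)/(nn*(1+4*a^2)) := by
    have h1 : (0:ℝ) < 1 + 4*a^2 := by positivity
    field_simp
    ring
  rw [hRe, div_le_div_iff₀ (by positivity) (by positivity)]
  nlinarith [mul_le_mul_of_nonneg_left (show 1+4*a^2 ≤ 120*a^2 by nlinarith)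
    (show (0:ℝ) ≤ nn by linarith)]

set_option maxHeartbeats 4000000 in
/-- There is `C > 0`, independent of `n`, such that for every `n ≥ 1` and all
`k, ℓ ∈ {1,…,n}`,
`(m_{k,n}⊙m_{ℓ,n})ᵀ Lₙ⁻¹ (m_{k,n}⊙m_{ℓ,n})
  ≤ (C/n) λ_{k,n}⁻¹ λ_{ℓ,n} k²(k²+ℓ²) / (ℓ²(1+(k+ℓ)²+(k²-ℓ²)²))`,
with `⊙` the entrywise product. -/
theorem stmt10 :
    ∃ C : ℝ, 0 < C ∧ ∀ n : ℕ, 1 ≤ n → ∀ k l : Fin n,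
      dotProduct (fun i => mvec n (k.1 + 1) i * mvec n (l.1 + 1) i)
          (Matrix.mulVec (Ldisc n)⁻¹ (fun i => mvec n (k.1 + 1) i * mvec n (l.1 + 1) i)) ≤
        (C / n) * (lamE n (k.1 + 1))⁻¹ * lamE n (l.1 + 1) *
          (((k.1 : ℝ) + 1) ^ 2 * (((k.1 : ℝ) + 1) ^ 2 + ((l.1 : ℝ) + 1) ^ 2)) /
          (((l.1 : ℝ) + 1) ^ 2 *
            (1 + (((k.1 : ℝ) + 1) + ((l.1 : ℝ) + 1)) ^ 2 +
              (((k.1 : ℝ) + 1) ^ 2 - ((l.1 : ℝ) + 1) ^ 2) ^ 2)) := by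
  refine ⟨30, by norm_num, ?_⟩
  intro n hn k l
  have hNpos : (0:ℝ) < (n:ℝ)+1 := by positivity
  have hn1 : (1:ℝ) ≤ (n:ℝ) := by exact_mod_cast hn
  set K : ℕ := k.1 + 1 with hK
  set L : ℕ := l.1 + 1 with hL
  have hKn : K ≤ n := by have := k.2; omega
  have hLn : L ≤ n := by have := l.2; omega
  have hK1 : 1 ≤ K := by omega
  have hL1 : 1 ≤ L := by omega
  set v : Fin n → ℝ := fun i => mvec n K i * mvec n L i with hv
  have cK : ((K:ℕ):ℝ) = (k.1:ℝ)+1 := by rw [hK]; push_cast; ring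
  have cL : ((L:ℕ):ℝ) = (l.1:ℝ)+1 := by rw [hL]; push_cast; ring
  have hvabs : ∀ i : Fin n, |v i| ≤ 2/((n:ℝ)+1) := by
    intro i
    rw [hv]
    simp only []
    rw [mvec_mul]
    rw [abs_mul, abs_of_nonneg (show (0:ℝ) ≤ 1/((n:ℝ)+1) by positivity)]
    calc (1/((n:ℝ)+1)) * |_ - _| ≤ (1/((n:ℝ)+1)) * 2 := by
          apply mul_le_mul_of_nonneg_left ?_ (by positivity)
          refine (abs_sub_le' _ _).trans ?_
          have := Real.abs_cos_le_one (((K:ℝ)-(L:ℝ))*π*((i.1:ℝ)+1)/((n:ℝ)+1))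
          have := Real.abs_cos_le_one (((K:ℝ)+(L:ℝ))*π*((i.1:ℝ)+1)/((n:ℝ)+1))
          linarith
      _ = 2/((n:ℝ)+1) := by ring
  set S : ℕ := K + L with hS
  have hS2 : 2 ≤ S := by omega
  have hSu : S ≤ 2*n := by omega
  have hls : 0 < lamE n S := lam_pos n S (by omega) (by omega)
  have hlsne : lamE n S ≠ 0 := ne_of_gt hls
  have cS : ((S:ℕ):ℝ) = (K:ℝ) + (L:ℝ) := by rw [hS]; push_cast; ring
  by_cases hKL : K = L
  · -- diagonal case
    have hls16 : (16:ℝ) ≤ lamE n S := by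
      rcases le_or_gt S (n+1) with hc | hc
      · have h1 := lam_lb n S hc
        have h2 : (2:ℝ) ≤ (S:ℝ) := by exact_mod_cast hS2
        nlinarith
      · have h1 := lam_lb' n S (by omega) hSu
        have h2 : (S:ℝ) ≤ 2*(n:ℝ) := by exact_mod_cast hSu
        nlinarith
    set g : ℕ → ℝ := fun j => (1/((n:ℝ)+1)) * (((j:ℝ)/((n:ℝ)+1))*(1-(j:ℝ)/((n:ℝ)+1))/2
        + (1 - Real.cos ((S:ℝ)*π*(j:ℝ)/((n:ℝ)+1)))/lamE n S) with hg
    have h0 : g 0 = 0 := by rw [hg]; simp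
    have hgN : g (n+1) = 0 := by
      rw [hg]
      simp only []
      have e0 : ((n+1:ℕ):ℝ) = (n:ℝ)+1 := by push_cast; ring
      rw [e0]
      have e1 : (S:ℝ)*π*((n:ℝ)+1)/((n:ℝ)+1) = (K:ℝ)*(2*π) := by
        have hS2K : (S:ℝ) = 2*(K:ℝ) := by
          rw [cS]
          have : (L:ℝ) = (K:ℝ) := by exact_mod_cast congrArg (Nat.cast : ℕ → ℝ) hKL.symm
          rw [this]; ring
        rw [hS2K]
        field_simp
      rw [e1, Real.cos_nat_mul_two_pi]
      field_simp
      ring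
    have hrow : ∀ i : Fin n,
        ((n:ℝ)+1)^2 * (2 * g (i.1+1) - g i.1 - g (i.1+2)) = v i := by
      intro i
      have c1 : ((i.1+1:ℕ):ℝ) = (i.1:ℝ)+1 := by push_cast; ring
      have c2 : ((i.1+2:ℕ):ℝ) = (i.1:ℝ)+2 := by push_cast; ring
      have ks := cos_second_diff n S (i.1:ℝ)
      rw [hv]
      simp only []
      rw [mvec_mul n K L i]
      have e3 : ((K:ℝ)-(L:ℝ))*π*((i.1:ℝ)+1)/((n:ℝ)+1) = 0 := by
        have : (K:ℝ) = (L:ℝ) := by exact_mod_cast congrArg (Nat.cast : ℕ → ℝ) hKL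
        rw [this]; ring
      rw [e3, Real.cos_zero]
      have e4 : ((K:ℝ)+(L:ℝ))*π*((i.1:ℝ)+1)/((n:ℝ)+1)
          = (S:ℝ)*π*((i.1:ℝ)+1)/((n:ℝ)+1) := by rw [cS]
      rw [e4, hg]
      simp only []
      rw [c1, c2]
      have hNne : ((n:ℝ)+1) ≠ 0 := ne_of_gt hNpos
      set y0 := Real.cos ((S:ℝ)*π*(i.1:ℝ)/((n:ℝ)+1))
      set y1 := Real.cos ((S:ℝ)*π*((i.1:ℝ)+1)/((n:ℝ)+1))
      set y2 := Real.cos ((S:ℝ)*π*((i.1:ℝ)+2)/((n:ℝ)+1))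
      have hdiff : ((n:ℝ)+1)^2 * (2 * ((1/((n:ℝ)+1)) * ((((i.1:ℝ)+1)/((n:ℝ)+1))*(1-((i.1:ℝ)+1)/((n:ℝ)+1))/2
            + (1 - y1)/lamE n S))
          - ((1/((n:ℝ)+1)) * (((i.1:ℝ)/((n:ℝ)+1))*(1-(i.1:ℝ)/((n:ℝ)+1))/2
            + (1 - y0)/lamE n S))
          - ((1/((n:ℝ)+1)) * ((((i.1:ℝ)+2)/((n:ℝ)+1))*(1-((i.1:ℝ)+2)/((n:ℝ)+1))/2
            + (1 - y2)/lamE n S)))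
          - (1/((n:ℝ)+1)) * (1 - y1)
          = (-(1/(((n:ℝ)+1)*lamE n S)))
            * (((n:ℝ)+1)^2 * (2*y1 - y0 - y2) - lamE n S * y1) := by
        field_simp
        ring
      rw [ks] at hdiff
      linarith [hdiff]
    have hw : (Ldisc n).mulVec (fun j : Fin n => g (j.1+1)) = v :=
      funext fun i => by rw [Ldisc_mulVec n g h0 hgN i]; exact hrow i
    have hinv : (Ldisc n)⁻¹.mulVec v = (fun j : Fin n => g (j.1+1)) :=
      Ldisc_inv_mulVec n v _ hw
    have hgabs : ∀ i : Fin n, |g (i.1+1)| ≤ (1/((n:ℝ)+1)) * (1/4) := by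
      intro i
      rw [hg]
      simp only []
      set x := ((i.1+1:ℕ):ℝ)/((n:ℝ)+1) with hx
      have hx0 : 0 ≤ x := by positivity
      have hx1 : x ≤ 1 := by
        rw [hx, div_le_one hNpos]
        have : i.1+1 ≤ n+1 := by omega
        exact_mod_cast this
      have hq1 : 0 ≤ x*(1-x)/2 := by nlinarith
      have hq2 : x*(1-x)/2 ≤ 1/8 := by nlinarith [sq_nonneg (x-1/2)]
      have hc1 : 0 ≤ (1 - Real.cos ((S:ℝ)*π*((i.1+1:ℕ):ℝ)/((n:ℝ)+1)))/lamE n S := by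
        apply div_nonneg ?_ (le_of_lt hls)
        linarith [Real.cos_le_one ((S:ℝ)*π*((i.1+1:ℕ):ℝ)/((n:ℝ)+1))]
      have hc2 : (1 - Real.cos ((S:ℝ)*π*((i.1+1:ℕ):ℝ)/((n:ℝ)+1)))/lamE n S ≤ 1/8 := by
        rw [div_le_iff₀ hls]
        nlinarith [Real.neg_one_le_cos ((S:ℝ)*π*((i.1+1:ℕ):ℝ)/((n:ℝ)+1)), hls16]
      rw [abs_mul, abs_of_nonneg (show (0:ℝ) ≤ 1/((n:ℝ)+1) by positivity),
        abs_of_nonneg (by linarith)]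
      apply mul_le_mul_of_nonneg_left ?_ (by positivity)
      linarith
    have hsum : dotProduct v ((Ldisc n)⁻¹.mulVec v) ≤ 1/(2*(n:ℝ)) := by
      rw [hinv]
      refine (dot_bound n v _ (2/((n:ℝ)+1)) ((1/((n:ℝ)+1))*(1/4)) hvabs hgabs).trans ?_
      rw [show ((n:ℝ))*((2/((n:ℝ)+1))*((1/((n:ℝ)+1))*(1/4))) = (n:ℝ)/(2*((n:ℝ)+1)^2) by
        field_simp; ring]
      rw [div_le_div_iff₀ (by positivity) (by positivity)]
      nlinarith [hn1]
    refine hsum.trans ?_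
    have hkl' : l.1 = k.1 := by omega
    rw [hkl', ← hKL]
    exact final_ineq_eq (n:ℝ) (lamE n K) ((k.1:ℝ)+1) hn1
      (lam_pos n K hK1 (by omega)) (by norm_num)
  · -- off-diagonal case
    set D : ℕ := max K L - min K L with hD
    have hD1 : 1 ≤ D := by omega
    have hDn : D ≤ n + 1 := by omega
    have hDS : D + S ≤ 2*n := by omega
    have hDleS : D ≤ S := by omega
    have hld : 0 < lamE n D := lam_pos n D hD1 (by omega)
    have hldne : lamE n D ≠ 0 := ne_of_gt hld
    have hD1R : (1:ℝ) ≤ (D:ℝ) := by exact_mod_cast hD1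
    have hdcast : ((K:ℝ)-(L:ℝ))^2 = (D:ℝ)^2 := by
      rcases le_total K L with hc | hc
      · have h1 : D = L - K := by omega
        have h2 : (D:ℝ) = (L:ℝ) - (K:ℝ) := by
          rw [h1]; push_cast [Nat.cast_sub hc]; ring
        rw [h2]; ring
      · have h1 : D = K - L := by omega
        have h2 : (D:ℝ) = (K:ℝ) - (L:ℝ) := by
          rw [h1]; push_cast [Nat.cast_sub hc]; ring
        rw [h2]
    -- lower bound for lamE n S in terms of D
    have hlsD : 4*(D:ℝ)^2 ≤ lamE n S := by
      rcases le_or_gt S (n+1) with hc | hc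
      · refine le_trans ?_ (lam_lb n S hc)
        have : (D:ℝ) ≤ (S:ℝ) := by exact_mod_cast hDleS
        nlinarith
      · refine le_trans ?_ (lam_lb' n S (by omega) hSu)
        have h1 : (D:ℝ) ≤ 2*(n:ℝ)+2-(S:ℝ) := by
          have : (D:ℝ) + (S:ℝ) ≤ 2*(n:ℝ) := by exact_mod_cast hDS
          linarith
        nlinarith [hD1R]
    have hldD : 4*(D:ℝ)^2 ≤ lamE n D := by
      refine le_trans (le_refl _) (lam_lb n D hDn)
    set ε : ℝ := Real.cos ((D:ℝ)*π) with hε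
    set g : ℕ → ℝ := fun j =>
      (1/((n:ℝ)+1)) * (Real.cos ((D:ℝ)*π*(j:ℝ)/((n:ℝ)+1))/lamE n D
          - Real.cos ((S:ℝ)*π*(j:ℝ)/((n:ℝ)+1))/lamE n S)
        - ((1/((n:ℝ)+1))*(1/lamE n D - 1/lamE n S))
          * ((1 - (j:ℝ)/((n:ℝ)+1)) + ε*((j:ℝ)/((n:ℝ)+1))) with hg
    have h0 : g 0 = 0 := by
      rw [hg]
      simp [Real.cos_zero]
    have hgN : g (n+1) = 0 := by
      rw [hg]
      simp only []
      have e0 : ((n+1:ℕ):ℝ) = (n:ℝ)+1 := by push_cast; ring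
      rw [e0]
      have e1 : (D:ℝ)*π*((n:ℝ)+1)/((n:ℝ)+1) = (D:ℝ)*π := by field_simp
      have e2 : (S:ℝ)*π*((n:ℝ)+1)/((n:ℝ)+1) = (D:ℝ)*π + ((min K L : ℕ):ℝ)*(2*π) := by
        have hSD : S = D + 2*(min K L) := by omega
        have hSc : (S:ℝ) = (D:ℝ) + 2*((min K L : ℕ):ℝ) := by
          rw [hSD]; push_cast; ring
        rw [hSc]
        field_simp
      rw [e1, e2, Real.cos_add_nat_mul_two_pi]
      rw [← hε]
      field_simp
      ring
    have hrow : ∀ i : Fin n,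
        ((n:ℝ)+1)^2 * (2 * g (i.1+1) - g i.1 - g (i.1+2)) = v i := by
      intro i
      have c1 : ((i.1+1:ℕ):ℝ) = (i.1:ℝ)+1 := by push_cast; ring
      have c2 : ((i.1+2:ℕ):ℝ) = (i.1:ℝ)+2 := by push_cast; ring
      have kd := cos_second_diff n D (i.1:ℝ)
      have ks := cos_second_diff n S (i.1:ℝ)
      rw [hv]
      simp only []
      rw [mvec_mul n K L i]
      have e3 : Real.cos (((K:ℝ)-(L:ℝ))*π*((i.1:ℝ)+1)/((n:ℝ)+1))
          = Real.cos ((D:ℝ)*π*((i.1:ℝ)+1)/((n:ℝ)+1)) := by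
        rcases le_total K L with hc | hc
        · have h2 : (D:ℝ) = (L:ℝ) - (K:ℝ) := by
            rw [show D = L - K by omega]; push_cast [Nat.cast_sub hc]; ring
          rw [show ((K:ℝ)-(L:ℝ))*π*((i.1:ℝ)+1)/((n:ℝ)+1)
              = -((D:ℝ)*π*((i.1:ℝ)+1)/((n:ℝ)+1)) by rw [h2]; ring]
          exact Real.cos_neg _
        · have h2 : (D:ℝ) = (K:ℝ) - (L:ℝ) := by
            rw [show D = K - L by omega]; push_cast [Nat.cast_sub hc]; ring
          rw [h2]
      have e4 : ((K:ℝ)+(L:ℝ))*π*((i.1:ℝ)+1)/((n:ℝ)+1)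
          = (S:ℝ)*π*((i.1:ℝ)+1)/((n:ℝ)+1) := by rw [cS]
      rw [e3, e4, hg]
      simp only []
      rw [c1, c2]
      have hNne : ((n:ℝ)+1) ≠ 0 := ne_of_gt hNpos
      set x0 := Real.cos ((D:ℝ)*π*(i.1:ℝ)/((n:ℝ)+1))
      set x1 := Real.cos ((D:ℝ)*π*((i.1:ℝ)+1)/((n:ℝ)+1))
      set x2 := Real.cos ((D:ℝ)*π*((i.1:ℝ)+2)/((n:ℝ)+1))
      set y0 := Real.cos ((S:ℝ)*π*(i.1:ℝ)/((n:ℝ)+1))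
      set y1 := Real.cos ((S:ℝ)*π*((i.1:ℝ)+1)/((n:ℝ)+1))
      set y2 := Real.cos ((S:ℝ)*π*((i.1:ℝ)+2)/((n:ℝ)+1))
      have hdiff : ((n:ℝ)+1)^2 * (2 * ((1/((n:ℝ)+1)) * (x1/lamE n D - y1/lamE n S)
            - ((1/((n:ℝ)+1))*(1/lamE n D - 1/lamE n S))
              * ((1 - ((i.1:ℝ)+1)/((n:ℝ)+1)) + ε*(((i.1:ℝ)+1)/((n:ℝ)+1))))
          - ((1/((n:ℝ)+1)) * (x0/lamE n D - y0/lamE n S)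
            - ((1/((n:ℝ)+1))*(1/lamE n D - 1/lamE n S))
              * ((1 - (i.1:ℝ)/((n:ℝ)+1)) + ε*((i.1:ℝ)/((n:ℝ)+1))))
          - ((1/((n:ℝ)+1)) * (x2/lamE n D - y2/lamE n S)
            - ((1/((n:ℝ)+1))*(1/lamE n D - 1/lamE n S))
              * ((1 - ((i.1:ℝ)+2)/((n:ℝ)+1)) + ε*(((i.1:ℝ)+2)/((n:ℝ)+1)))))
          - (1/((n:ℝ)+1)) * (x1 - y1)
          = (1/(((n:ℝ)+1)*lamE n D))
            * (((n:ℝ)+1)^2 * (2*x1 - x0 - x2) - lamE n D * x1)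
          - (1/(((n:ℝ)+1)*lamE n S))
            * (((n:ℝ)+1)^2 * (2*y1 - y0 - y2) - lamE n S * y1) := by
        field_simp
        ring
      rw [kd, ks] at hdiff
      linarith [hdiff]
    have hw : (Ldisc n).mulVec (fun j : Fin n => g (j.1+1)) = v :=
      funext fun i => by rw [Ldisc_mulVec n g h0 hgN i]; exact hrow i
    have hinv : (Ldisc n)⁻¹.mulVec v = (fun j : Fin n => g (j.1+1)) :=
      Ldisc_inv_mulVec n v _ hw
    have hgabs : ∀ i : Fin n,
        |g (i.1+1)| ≤ (2/((n:ℝ)+1)) * (1/lamE n D + 1/lamE n S) := by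
      intro i
      rw [hg]
      simp only []
      set x := ((i.1+1:ℕ):ℝ)/((n:ℝ)+1) with hx
      have hx0 : 0 ≤ x := by positivity
      have hx1 : x ≤ 1 := by
        rw [hx, div_le_one hNpos]
        have : i.1+1 ≤ n+1 := by omega
        exact_mod_cast this
      have t1 : |(1/((n:ℝ)+1)) * (Real.cos ((D:ℝ)*π*((i.1+1:ℕ):ℝ)/((n:ℝ)+1))/lamE n D
          - Real.cos ((S:ℝ)*π*((i.1+1:ℕ):ℝ)/((n:ℝ)+1))/lamE n S)|
          ≤ (1/((n:ℝ)+1)) * (1/lamE n D + 1/lamE n S) := by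
        rw [abs_mul, abs_of_nonneg (show (0:ℝ) ≤ 1/((n:ℝ)+1) by positivity)]
        apply mul_le_mul_of_nonneg_left ?_ (by positivity)
        refine (abs_sub_le' _ _).trans ?_
        rw [abs_div, abs_div, abs_of_pos hld, abs_of_pos hls]
        gcongr
        · exact Real.abs_cos_le_one _
        · exact Real.abs_cos_le_one _
      have t2 : |((1/((n:ℝ)+1))*(1/lamE n D - 1/lamE n S))
          * ((1 - x) + ε*x)| ≤ (1/((n:ℝ)+1)) * (1/lamE n D + 1/lamE n S) := by
        rw [abs_mul, abs_mul, abs_of_nonneg (show (0:ℝ) ≤ 1/((n:ℝ)+1) by positivity)]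
        have u1 : |1/lamE n D - 1/lamE n S| ≤ 1/lamE n D + 1/lamE n S := by
          refine (abs_sub_le' _ _).trans ?_
          rw [abs_of_pos (by positivity), abs_of_pos (by positivity)]
        have u2 : |(1 - x) + ε*x| ≤ 1 := by
          refine (abs_add_le _ _).trans ?_
          rw [abs_of_nonneg (by linarith), abs_mul]
          have := Real.abs_cos_le_one ((D:ℝ)*π)
          rw [abs_of_nonneg hx0]
          nlinarith [this, hx0]
        calc (1/((n:ℝ)+1)) * |1/lamE n D - 1/lamE n S| * |(1 - x) + ε*x|
            ≤ (1/((n:ℝ)+1)) * (1/lamE n D + 1/lamE n S) * 1 := by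
              apply mul_le_mul ?_ u2 (abs_nonneg _) (by positivity)
              exact mul_le_mul_of_nonneg_left u1 (by positivity)
          _ = (1/((n:ℝ)+1)) * (1/lamE n D + 1/lamE n S) := by ring
      calc |_ - _| ≤ _ + _ := (abs_sub_le' _ _).trans (add_le_add t1 t2)
        _ = (2/((n:ℝ)+1)) * (1/lamE n D + 1/lamE n S) := by ring
    have hsum : dotProduct v ((Ldisc n)⁻¹.mulVec v) ≤ 2/((n:ℝ)*(D:ℝ)^2) := by
      rw [hinv]
      refine (dot_bound n v _ (2/((n:ℝ)+1))
        ((2/((n:ℝ)+1)) * (1/lamE n D + 1/lamE n S)) hvabs hgabs).trans ?_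
      have hstep1 : (n:ℝ)*((2/((n:ℝ)+1))*((2/((n:ℝ)+1)) * (1/lamE n D + 1/lamE n S)))
          = (4*(n:ℝ)/((n:ℝ)+1)^2) * (1/lamE n D + 1/lamE n S) := by
        field_simp
        ring
      rw [hstep1]
      have hinvd : 1/lamE n D ≤ 1/(4*(D:ℝ)^2) :=
        one_div_le_one_div_of_le (by positivity) hldD
      have hinvs : 1/lamE n S ≤ 1/(4*(D:ℝ)^2) :=
        one_div_le_one_div_of_le (by positivity) hlsD
      calc (4*(n:ℝ)/((n:ℝ)+1)^2) * (1/lamE n D + 1/lamE n S)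
          ≤ (4*(n:ℝ)/((n:ℝ)+1)^2) * (1/(4*(D:ℝ)^2) + 1/(4*(D:ℝ)^2)) := by
            apply mul_le_mul_of_nonneg_left (add_le_add hinvd hinvs) (by positivity)
        _ = 2*(n:ℝ)/(((n:ℝ)+1)^2*(D:ℝ)^2) := by
            field_simp
            ring
        _ ≤ 2/((n:ℝ)*(D:ℝ)^2) := by
            rw [div_le_div_iff₀ (by positivity) (by positivity)]
            nlinarith [mul_le_mul_of_nonneg_right
              (show (n:ℝ)^2 ≤ ((n:ℝ)+1)^2 by nlinarith)
              (show (0:ℝ) ≤ (D:ℝ)^2 by positivity), hD1R]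
    refine hsum.trans ?_
    have hds2 : (((k.1:ℝ)+1) - ((l.1:ℝ)+1))^2 = (D:ℝ)^2 := by
      rw [← cK, ← cL]; exact hdcast
    have hseq : (S:ℝ) = ((k.1:ℝ)+1) + ((l.1:ℝ)+1) := by rw [cS, cK, cL]
    exact final_ineq (n:ℝ) (lamE n K) (lamE n L) ((k.1:ℝ)+1) ((l.1:ℝ)+1) (D:ℝ) (S:ℝ)
      hn1 (lam_pos n K hK1 (by omega))
      (by rw [← cK]; exact lam_ub n K (by omega))
      (by rw [← cL]; exact lam_lb n L (by omega))
      (by norm_num) (by norm_num) hD1R hseq hds2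
end

section
/- For all integers n ≥ 1 and p ≥ 1, the sum Σ_{i=1}^n sin(pπi/(n+1)) equals 0 if p is even, and equals cot(pπ/(2(n+1))) if p is odd. (In the odd case sin(pπ/(2(n+1))) ≠ 0, so the cotangent is well defined.) -/
open Real Finset

/-- For integers `n ≥ 1` and `p ≥ 1`, the sum `∑_{i=1}^n sin(pπi/(n+1))` equals `0`
if `p` is even, and equals `cot(pπ/(2(n+1))) = cos(pπ/(2(n+1)))/sin(pπ/(2(n+1)))`
if `p` is odd; in the odd case `sin(pπ/(2(n+1))) ≠ 0`, so the cotangent is well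
defined. -/
theorem stmt13 (n p : ℕ) (hn : 1 ≤ n) (hp : 1 ≤ p) :
    (Even p →
      ∑ i ∈ Finset.Icc 1 n, Real.sin ((p : ℝ) * Real.pi * (i : ℝ) / ((n : ℝ) + 1)) = 0) ∧
    (¬ Even p →
      Real.sin ((p : ℝ) * Real.pi / (2 * ((n : ℝ) + 1))) ≠ 0 ∧
      ∑ i ∈ Finset.Icc 1 n, Real.sin ((p : ℝ) * Real.pi * (i : ℝ) / ((n : ℝ) + 1)) =
        Real.cos ((p : ℝ) * Real.pi / (2 * ((n : ℝ) + 1))) /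
          Real.sin ((p : ℝ) * Real.pi / (2 * ((n : ℝ) + 1)))) := by
  have hπ := Real.pi_pos
  have hN : ((n : ℝ) + 1) ≠ 0 := by positivity
  have hsinp : Real.sin ((p : ℝ) * Real.pi) = 0 := Real.sin_nat_mul_pi p
  constructor
  · rintro hpe
    obtain ⟨m, hm⟩ := hpe
    have hcos : Real.cos ((p : ℝ) * Real.pi) = 1 := by
      subst hm; push_cast
      rw [show ((m:ℝ)+m)*Real.pi = m*(2*Real.pi) by ring, Real.cos_nat_mul_two_pi]
    set S := ∑ i ∈ Finset.Icc 1 n, Real.sin ((p : ℝ) * Real.pi * (i : ℝ) / ((n : ℝ) + 1)) with hS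
    have key : S = -S := by
      nth_rewrite 1 [hS]
      rw [show (-S) = ∑ i ∈ Finset.Icc 1 n, -Real.sin ((p : ℝ) * Real.pi * (i : ℝ) / ((n : ℝ) + 1)) by rw [hS, Finset.sum_neg_distrib]]
      apply Finset.sum_nbij' (fun i => n + 1 - i) (fun i => n + 1 - i)
      · intro a ha; simp only [Finset.mem_Icc] at *; omega
      · intro a ha; simp only [Finset.mem_Icc] at *; omega
      · intro a ha; simp only [Finset.mem_Icc] at *; omega
      · intro a ha; simp only [Finset.mem_Icc] at *; omega
      · intro a ha
        simp only [Finset.mem_Icc] at ha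
        have hcast : ((n + 1 - a : ℕ) : ℝ) = (n : ℝ) + 1 - a := by
          have : a ≤ n + 1 := by omega
          push_cast [this]; ring
        rw [hcast]
        have harg : (p : ℝ) * Real.pi * ((n : ℝ) + 1 - a) / ((n : ℝ) + 1)
            = (p : ℝ) * Real.pi - (p : ℝ) * Real.pi * a / ((n : ℝ) + 1) := by
          field_simp
        rw [harg, Real.sin_sub, hsinp, hcos]; ring
    linarith
  · intro hpo
    rw [Nat.not_even_iff_odd] at hpo
    have hcos : Real.cos ((p : ℝ) * Real.pi) = -1 := by
      obtain ⟨m, hm⟩ := hpo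
      subst hm; push_cast
      rw [show (2*(m:ℝ)+1)*Real.pi = m*(2*Real.pi) + Real.pi by ring]
      rw [Real.cos_nat_mul_two_pi_add_pi]
    set s := (p : ℝ) * Real.pi / (2 * ((n : ℝ) + 1)) with hs
    have hspos : 0 < s := by
      apply div_pos
      · have : (1:ℝ) ≤ p := by exact_mod_cast hp
        nlinarith
      · positivity
    have hsnz : Real.sin s ≠ 0 := by
      intro h
      rw [Real.sin_eq_zero_iff] at h
      obtain ⟨k, hk⟩ := h
      have : (k : ℝ) * (2 * ((n : ℝ) + 1)) = p := by
        rw [hs] at hk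
        field_simp at hk
        have := Real.pi_ne_zero
        nlinarith [hk]
      have hz : ((k * (2 * ((n:ℕ) + 1)) : ℤ) : ℝ) = ((p:ℤ) : ℝ) := by push_cast; push_cast at this; linarith
      have hz2 : (k * (2 * ((n:ℕ) + 1)) : ℤ) = (p : ℤ) := by exact_mod_cast hz
      have hev : Even ((p:ℤ)) := ⟨k * ((n:ℤ)+1), by linarith [hz2]⟩
      rw [Int.even_coe_nat] at hev
      exact (Nat.not_even_iff_odd.mpr hpo) hev
    refine ⟨hsnz, ?_⟩
    set S := ∑ i ∈ Finset.Icc 1 n, Real.sin ((p : ℝ) * Real.pi * (i : ℝ) / ((n : ℝ) + 1)) with hS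
    have key : 2 * Real.sin s * S = 2 * Real.cos s := by
      rw [hS, Finset.mul_sum]
      have hrw : ∀ i ∈ Finset.Icc 1 n,
          2 * Real.sin s * Real.sin ((p : ℝ) * Real.pi * (i : ℝ) / ((n : ℝ) + 1))
          = Real.cos ((2 * (i:ℝ) - 1) * s) - Real.cos ((2 * (i:ℝ) + 1) * s) := by
        intro i hi
        rw [Real.cos_sub_cos]
        have h1 : ((2 * (i:ℝ) - 1) * s + (2 * (i:ℝ) + 1) * s) / 2 = 2 * i * s := by ring
        have h2 : ((2 * (i:ℝ) - 1) * s - (2 * (i:ℝ) + 1) * s) / 2 = -s := by ring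
        rw [h1, h2, Real.sin_neg]
        have harg : (p : ℝ) * Real.pi * (i : ℝ) / ((n : ℝ) + 1) = 2 * i * s := by
          rw [hs]; field_simp
        rw [harg]; ring
      rw [Finset.sum_congr rfl hrw]
      have htel : ∑ i ∈ Finset.Icc 1 n,
          (Real.cos ((2 * (i:ℝ) - 1) * s) - Real.cos ((2 * (i:ℝ) + 1) * s))
          = Real.cos s - Real.cos ((2 * (n:ℝ) + 1) * s) := by
        rw [← Finset.Ico_add_one_right_eq_Icc, Finset.sum_Ico_eq_sum_range]
        simp only [Nat.add_sub_cancel]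
        have := Finset.sum_range_sub' (fun j => Real.cos ((2 * (j:ℝ) + 1) * s)) n
        rw [show Real.cos s = Real.cos ((2 * ((0:ℕ):ℝ) + 1) * s) by norm_num, ← this]
        apply Finset.sum_congr rfl
        intro j hj
        push_cast
        ring_nf
      rw [htel]
      have hlast : (2 * (n:ℝ) + 1) * s = (p : ℝ) * Real.pi - s := by
        rw [hs]; field_simp; ring
      rw [hlast, Real.cos_sub, hsinp, hcos]
      ring
    field_simp
    nlinarith [key]
end
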